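/- arXiv:1412.0987 — 2 statements merged into one kernel-verified Lean document; each statement's English description precedes it below -/
import Mathlib

section
/- Let I be a lower ideal of Δ(1) and let w = w_{I,max} ∈ W⁰ be the unique element with N(w) = Δ(≥1) \ ⟨I^c⟩. For γ ∈ Δ(1), one has γ ∈ min(Δ(1) \ I) if and only if w(γ) ∈ Π. -/
open RealInnerProductSpace

variable {V : Type*} [NormedAddCommGroup V] [InnerProductSpace ℝ V] [FiniteDimensional ℝ V]

/-- The orthogonal reflection in the hyperplane orthogonal to `α`. -/
noncomputable def sref (α : V) : V ≃ₗ[ℝ] V :=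
  (Submodule.reflection ((ℝ ∙ α)ᗮ)).toLinearEquiv

/-- `Δ` is an (irreducible, crystallographic, reduced) root system, equipped with a
`ℤ`-grading `d` (so that `Δ(i) = {γ ∈ Δ | d γ = i}`) and a compatible set `Pos = Δ⁺`
of positive roots (compatibility: every root of level `≥ 1` is positive). -/
structure GradedRootSystem (Δ : Set V) (d : V → ℤ) (Pos : Set V) : Prop where
  finite : Δ.Finite
  span_top : Submodule.span ℝ Δ = ⊤
  nonzero : ∀ α ∈ Δ, α ≠ 0
  neg_mem : ∀ α ∈ Δ, -α ∈ Δ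
  reduced : ∀ α ∈ Δ, ∀ c : ℝ, c • α ∈ Δ → c = 1 ∨ c = -1
  reflect_mem : ∀ α ∈ Δ, ∀ β ∈ Δ, β - (2 * ⟪β, α⟫ / ⟪α, α⟫) • α ∈ Δ
  crystallographic : ∀ α ∈ Δ, ∀ β ∈ Δ, ∃ n : ℤ, (n : ℝ) = 2 * ⟪β, α⟫ / ⟪α, α⟫
  irreducible : ∀ Δ₁ Δ₂ : Set V, Δ = Δ₁ ∪ Δ₂ → (∀ a ∈ Δ₁, ∀ b ∈ Δ₂, ⟪a, b⟫ = 0) →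
    Δ₁ = ∅ ∨ Δ₂ = ∅
  grade_add : ∀ γ₁ ∈ Δ, ∀ γ₂ ∈ Δ, γ₁ + γ₂ ∈ Δ → d (γ₁ + γ₂) = d γ₁ + d γ₂
  grade_neg : ∀ γ ∈ Δ, d (-γ) = - d γ
  pos_subset : Pos ⊆ Δ
  pos_iff : ∀ γ ∈ Δ, (γ ∈ Pos ↔ -γ ∉ Pos)
  pos_add : ∀ γ₁ ∈ Pos, ∀ γ₂ ∈ Pos, γ₁ + γ₂ ∈ Δ → γ₁ + γ₂ ∈ Pos
  compatible : ∀ γ ∈ Δ, 1 ≤ d γ → γ ∈ Pos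

/-- The level set `Δ(i)` of the grading. -/
def level (Δ : Set V) (d : V → ℤ) (i : ℤ) : Set V := {γ ∈ Δ | d γ = i}

/-- `Δ(≥ k)`. -/
def levelGE (Δ : Set V) (d : V → ℤ) (k : ℤ) : Set V := {γ ∈ Δ | k ≤ d γ}

/-- `Δ(≤ k)`. -/
def levelLE (Δ : Set V) (d : V → ℤ) (k : ℤ) : Set V := {γ ∈ Δ | d γ ≤ k}

/-- `Δ(0)⁺`, the positive part of `Δ(0)`. -/
def pos0 (d : V → ℤ) (Pos : Set V) : Set V := {γ ∈ Pos | d γ = 0}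

/-- The simple roots of a positive system `P`: positive roots that are not the sum
of two positive roots. -/
def simpleRoots (P : Set V) : Set V := {γ ∈ P | ¬ ∃ a ∈ P, ∃ b ∈ P, γ = a + b}

/-- `idealPow Δ I k = I^k`, with `I¹ = I` and `I^{k+1} = (I + I^k) ∩ Δ`
(and `I⁰ = ∅` by convention). -/
def idealPow (Δ I : Set V) : ℕ → Set V
  | 0 => ∅
  | 1 => I
  | (k+2) => {x ∈ Δ | ∃ a ∈ I, ∃ b ∈ idealPow Δ I (k+1), x = a + b}

/-- `⟨I⟩ = ⋃_{k ≥ 1} I^k`. -/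
def gen (Δ I : Set V) : Set V := ⋃ k : ℕ, idealPow Δ I (k+1)

/-- A subset `M` of roots is closed if it is closed under root addition. -/
def IsClosedSubset (Δ M : Set V) : Prop :=
  ∀ γ₁ ∈ M, ∀ γ₂ ∈ M, γ₁ + γ₂ ∈ Δ → γ₁ + γ₂ ∈ M

/-- Bi-convexity of `M ⊆ Δ⁺`: both `M` and `Δ⁺ \ M` are closed. -/
def IsBiConvex (Δ Pos M : Set V) : Prop :=
  IsClosedSubset Δ M ∧ IsClosedSubset Δ (Pos \ M)

/-- The partial order on each level `Δ(i)`: `γ' ≼ γ` iff `γ - γ'` is a nonnegative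
integral combination of the simple roots `Π(0)` of `Δ(0)⁺`. -/
def leLevel (d : V → ℤ) (Pos : Set V) (γ' γ : V) : Prop :=
  γ - γ' ∈ AddSubmonoid.closure (simpleRoots (pos0 d Pos))

/-- A lower ideal of the weight poset `Δ(i)`. -/
def IsLowerIdeal (Δ : Set V) (d : V → ℤ) (Pos : Set V) (i : ℤ) (I : Set V) : Prop :=
  I ⊆ level Δ d i ∧ ∀ γ ∈ I, ∀ ν ∈ level Δ d i, leLevel d Pos ν γ → ν ∈ I

/-- An upper ideal of the weight poset `Δ(i)`. -/
def IsUpperIdeal (Δ : Set V) (d : V → ℤ) (Pos : Set V) (i : ℤ) (I : Set V) : Prop :=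
  I ⊆ level Δ d i ∧ ∀ γ ∈ I, ∀ ν ∈ level Δ d i, leLevel d Pos γ ν → ν ∈ I

/-- The Weyl group of the set of roots `S`: the subgroup of `GL(V)` generated by the
reflections `s_α`, `α ∈ S`. -/
noncomputable def weyl (S : Set V) : Subgroup (V ≃ₗ[ℝ] V) :=
  Subgroup.closure {g | ∃ α ∈ S, g = sref α}

/-- The inversion set `N(w) = {γ ∈ Δ⁺ | -w(γ) ∈ Δ⁺}`. -/
def invSet (Pos : Set V) (w : V ≃ₗ[ℝ] V) : Set V := {γ ∈ Pos | -(w γ) ∈ Pos}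

/-- `W⁰`, the minimal length coset representatives of `W/W(0)`:
elements of `W` sending `Δ(0)⁺` into `Δ⁺`. -/
noncomputable def W0 (Δ : Set V) (d : V → ℤ) (Pos : Set V) : Set (V ≃ₗ[ℝ] V) :=
  {w | w ∈ weyl Δ ∧ ∀ γ ∈ pos0 d Pos, w γ ∈ Pos}

namespace Stmt8Aux
set_option linter.unusedSectionVars false

lemma sref_apply {α : V} (hα : α ≠ 0) (v : V) :
    sref α v = v - (2 * ⟪v, α⟫ / ⟪α, α⟫) • α := by
  have h1 : (sref α) v = (Submodule.reflection ((ℝ ∙ α)ᗮ)) v := rfl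
  rw [h1, Submodule.reflection_apply, Submodule.starProjection_orthogonal_val,
    Submodule.starProjection_singleton (𝕜 := ℝ)]
  rw [real_inner_self_eq_norm_sq, real_inner_comm v α]
  rw [two_smul]
  simp only [RCLike.ofReal_real_eq_id, id_eq]
  module

lemma sref_symm (α : V) : (sref α).symm = sref α := by
  have h1 : (sref α).symm = ((Submodule.reflection ((ℝ ∙ α)ᗮ)).symm).toLinearEquiv := rfl
  rw [h1, Submodule.reflection_symm]
  rfl

end Stmt8Aux
namespace Stmt8Aux
set_option linter.unusedSectionVars false
set_option linter.unusedVariables false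
set_option maxHeartbeats 800000

variable {Δ : Set V} {d : V → ℤ} {Pos : Set V}

lemma inner_self_pos' {α : V} (hα : α ≠ 0) : 0 < ⟪α, α⟫ :=
  lt_of_le_of_ne real_inner_self_nonneg (Ne.symm (inner_self_ne_zero.mpr hα))

/-- Cauchy–Schwarz strict inequality for non-proportional roots. -/
lemma cs_strict (h : GradedRootSystem Δ d Pos) {α β : V} (hα : α ∈ Δ) (hβ : β ∈ Δ)
    (hip : 0 < ⟪α, β⟫) (hne : α ≠ β) :
    ⟪α, β⟫ * ⟪α, β⟫ < ⟪α, α⟫ * ⟪β, β⟫ := by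
  rcases lt_or_eq_of_le (real_inner_mul_inner_self_le α β) with h1 | h1
  · exact h1
  exfalso
  have hα0 := h.nonzero α hα
  have hβ0 := h.nonzero β hβ
  have hnα : (0:ℝ) < ‖α‖ := norm_pos_iff.mpr hα0
  have hnβ : (0:ℝ) < ‖β‖ := norm_pos_iff.mpr hβ0
  have heq : ⟪α, β⟫ = ‖α‖ * ‖β‖ := by
    nlinarith [real_inner_self_eq_norm_mul_norm α, real_inner_self_eq_norm_mul_norm β,
      real_inner_le_norm α β]
  have hone : |⟪α, β⟫ / (‖α‖ * ‖β‖)| = 1 := by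
    rw [heq, div_self (by positivity), abs_one]
  obtain ⟨-, r, hr0, hrβ⟩ := (abs_real_inner_div_norm_mul_norm_eq_one_iff α β).mp hone
  rcases h.reduced α hα r (hrβ ▸ hβ) with rfl | rfl
  · rw [one_smul] at hrβ; exact hne hrβ.symm
  · rw [hrβ, real_inner_smul_right] at hip
    have := inner_self_pos' hα0
    nlinarith

/-- Key lemma: two roots with positive inner product differ by a root. -/
lemma lemA (h : GradedRootSystem Δ d Pos) {α β : V} (hα : α ∈ Δ) (hβ : β ∈ Δ)
    (hip : 0 < ⟪α, β⟫) (hne : α ≠ β) : α - β ∈ Δ := by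
  obtain ⟨n, hn⟩ := h.crystallographic β hβ α hα
  obtain ⟨m, hm⟩ := h.crystallographic α hα β hβ
  have hαα : 0 < ⟪α, α⟫ := inner_self_pos' (h.nonzero α hα)
  have hββ : 0 < ⟪β, β⟫ := inner_self_pos' (h.nonzero β hβ)
  have hip' : 0 < ⟪β, α⟫ := by rwa [real_inner_comm]
  have hn0 : 0 < n := by
    have : (0:ℝ) < (n:ℝ) := by rw [hn]; positivity
    exact_mod_cast this
  have hm0 : 0 < m := by
    have : (0:ℝ) < (m:ℝ) := by rw [hm]; positivity
    exact_mod_cast this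
  have hcs := cs_strict h hα hβ hip hne
  have hnm : (n:ℝ) * (m:ℝ) < 4 := by
    rw [hn, hm]
    rw [div_mul_div_comm]
    rw [div_lt_iff₀ (by positivity)]
    nlinarith [real_inner_comm α β]
  have hnm' : n * m < 4 := by exact_mod_cast hnm
  have h1 : n = 1 ∨ m = 1 := by
    by_contra hc
    push_neg at hc
    have : 2 ≤ n := by omega
    have : 2 ≤ m := by omega
    nlinarith
  rcases h1 with h1 | h1
  · have := h.reflect_mem β hβ α hα
    rw [← hn, h1] at this
    simpa using this
  · have := h.reflect_mem α hα β hβ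
    rw [← hm, h1] at this
    have := h.neg_mem _ this
    simpa using this

lemma lemA' (h : GradedRootSystem Δ d Pos) {α β : V} (hα : α ∈ Δ) (hβ : β ∈ Δ)
    (hip : ⟪α, β⟫ < 0) (hne : α ≠ -β) : α + β ∈ Δ := by
  have hβ' := h.neg_mem β hβ
  have : α - (-β) ∈ Δ := lemA h hα hβ' (by rw [inner_neg_right]; linarith) hne
  simpa using this

end Stmt8Aux
namespace Stmt8Aux2
open Stmt8Aux
set_option linter.unusedSectionVars false
set_option linter.unusedVariables false
set_option maxHeartbeats 1000000

variable {Δ : Set V} {d : V → ℤ} {Pos : Set V}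

attribute [local instance] Classical.decEq

lemma inner_multiset_sum (x : V) (m : Multiset V) :
    ⟪x, m.sum⟫ = (m.map (fun t => ⟪x, t⟫)).sum := by
  induction m using Multiset.induction with
  | empty => simp
  | cons a s ih => simp [inner_add_right, ih]

lemma exists_pos_inner {m : Multiset V} {x : V} (hpos : 0 < ⟪x, m.sum⟫) :
    ∃ t ∈ m, 0 < ⟪x, t⟫ := by
  by_contra hc
  push_neg at hc
  have hle : ⟪x, m.sum⟫ ≤ 0 := by
    rw [inner_multiset_sum]
    have : ∀ y ∈ m.map (fun t => ⟪x, t⟫), y ≤ 0 := by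
      intro y hy
      obtain ⟨t, ht, rfl⟩ := Multiset.mem_map.mp hy
      exact hc t ht
    revert this
    generalize m.map (fun t => ⟪x, t⟫) = l
    intro hl
    induction l using Multiset.induction with
    | empty => simp
    | cons a s ih =>
      rw [Multiset.sum_cons]
      exact add_nonpos (hl a (by simp)) (ih (fun y hy => hl y (by simp [hy])))
  linarith

lemma exists_neg_inner {m : Multiset V} {x : V} (hneg : ⟪x, m.sum⟫ < 0) :
    ∃ t ∈ m, ⟪x, t⟫ < 0 := by
  have : 0 < ⟪-x, m.sum⟫ := by rw [inner_neg_left]; linarith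
  obtain ⟨t, ht, h⟩ := exists_pos_inner this
  rw [inner_neg_left] at h
  exact ⟨t, ht, by linarith⟩

/-- No nonempty multiset of positive roots sums to zero. -/
lemma lemS (h : GradedRootSystem Δ d Pos) :
    ∀ (n : ℕ) (m : Multiset V), m.card = n → (∀ t ∈ m, t ∈ Pos) → m ≠ 0 → m.sum ≠ 0 := by
  intro n
  induction n using Nat.strong_induction_on with
  | _ n ih =>
    intro m hcard hm hne hsum
    obtain ⟨a, ha⟩ := Multiset.exists_mem_of_ne_zero hne
    have haP := hm a ha
    have haΔ := h.pos_subset haP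
    have hsplit : m.sum = a + (m.erase a).sum := by
      rw [← Multiset.sum_cons, Multiset.cons_erase ha]
    have hrest : ⟪a, (m.erase a).sum⟫ < 0 := by
      have h1 : ⟪a, m.sum⟫ = 0 := by rw [hsum, inner_zero_right]
      rw [hsplit, inner_add_right, real_inner_self_eq_norm_mul_norm] at h1
      have : (0:ℝ) < ‖a‖ * ‖a‖ := by
        have := norm_pos_iff.mpr (h.nonzero a haΔ)
        positivity
      linarith
    obtain ⟨b, hb, hab⟩ := exists_neg_inner hrest
    have hbm : b ∈ m := Multiset.mem_of_mem_erase hb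
    have hbP := hm b hbm
    have hbΔ := h.pos_subset hbP
    have hbne : a ≠ -b := fun he => ((h.pos_iff b hbΔ).mp hbP) (he ▸ haP)
    have habΔ : a + b ∈ Δ := lemA' h haΔ hbΔ hab hbne
    have habP : a + b ∈ Pos := h.pos_add a haP b hbP habΔ
    set m' : Multiset V := (a + b) ::ₘ ((m.erase a).erase b) with hm'
    have hcard' : m'.card = n - 1 := by
      have h1 : (m.erase a).card = n - 1 := by rw [Multiset.card_erase_of_mem ha, hcard]; rfl
      have h2 : ((m.erase a).erase b).card = n - 2 := by
        rw [Multiset.card_erase_of_mem hb, h1, Nat.pred_eq_sub_one]; omega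
      rw [hm', Multiset.card_cons, h2]
      have hn2 : 2 ≤ n := by
        by_contra hc
        interval_cases n
        · simp at hcard; exact hne hcard
        · obtain ⟨c, hc'⟩ := Multiset.card_eq_one.mp hcard
          rw [hc'] at ha hb
          simp at ha
          subst ha
          simp at hb
      omega
    have hsum' : m'.sum = 0 := by
      rw [hm', Multiset.sum_cons]
      have : ((m.erase a).erase b).sum = (m.erase a).sum - b := by
        have := Multiset.cons_erase hb
        have h2 : (m.erase a).sum = b + ((m.erase a).erase b).sum := by
          rw [← Multiset.sum_cons, this]
        rw [h2]; abel
      rw [this]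
      have : (m.erase a).sum = m.sum - a := by rw [hsplit]; abel
      rw [this, hsum]
      abel
    have hm'P : ∀ t ∈ m', t ∈ Pos := by
      intro t ht
      rw [hm', Multiset.mem_cons] at ht
      rcases ht with rfl | ht
      · exact habP
      · exact hm t (Multiset.mem_of_mem_erase (Multiset.mem_of_mem_erase ht))
    have hne' : m' ≠ 0 := by simp [hm']
    have hlt : n - 1 < n := by
      have : 1 ≤ n := by
        rw [← hcard]
        exact Multiset.card_pos.mpr hne
      omega
    exact ih (n-1) hlt m' hcard' hm'P hne' hsum'

/-- extraction: a root which is a sum of ≥2 positive roots decomposes. -/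
lemma extract (h : GradedRootSystem Δ d Pos) {x : V} {m : Multiset V} (hx : x ∈ Δ)
    (hm : ∀ t ∈ m, t ∈ Pos) (hsum : x = m.sum) (hcard : 2 ≤ m.card) :
    ∃ t ∈ m, x ≠ t ∧ x - t ∈ Δ ∧ x - t = (m.erase t).sum := by
  have hxx : 0 < ⟪x, m.sum⟫ := by
    rw [← hsum]
    exact inner_self_pos' (h.nonzero x hx)
  obtain ⟨t, ht, hip⟩ := exists_pos_inner hxx
  have htΔ := h.pos_subset (hm t ht)
  have hsplit : x = t + (m.erase t).sum := by
    rw [hsum, ← Multiset.sum_cons, Multiset.cons_erase ht]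
  have hxt : x ≠ t := by
    intro he
    have h0 : (m.erase t).sum = 0 := by
      have h2 : t = t + (m.erase t).sum := by nth_rewrite 1 [← he]; exact hsplit
      exact (left_eq_add.mp h2)
    have hcard2 : (m.erase t) ≠ 0 := by
      have : (m.erase t).card = m.card - 1 := Multiset.card_erase_of_mem ht
      intro hc
      rw [hc] at this
      simp at this
      omega
    exact lemS h (m.erase t).card (m.erase t) rfl
      (fun s hs => hm s (Multiset.mem_of_mem_erase hs)) hcard2 h0
  refine ⟨t, ht, hxt, lemA h hx htΔ hip hxt, ?_⟩
  rw [hsplit]; abel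

end Stmt8Aux2
namespace Stmt8Aux3
open Stmt8Aux Stmt8Aux2
set_option linter.unusedSectionVars false
set_option linter.unusedVariables false
set_option maxHeartbeats 1000000

variable {Δ : Set V} {d : V → ℤ} {Pos : Set V}

attribute [local instance] Classical.decEq

/-- A root which is a sum of positive roots is positive. -/
lemma lemP1 (h : GradedRootSystem Δ d Pos) :
    ∀ (n : ℕ) (m : Multiset V), m.card = n → (∀ t ∈ m, t ∈ Pos) →
    ∀ x ∈ Δ, x = m.sum → x ∈ Pos := by
  intro n
  induction n using Nat.strong_induction_on with
  | _ n ih =>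
    intro m hcard hm x hx hsum
    rcases Nat.lt_or_ge n 2 with hn | hn
    · interval_cases n
      · rw [Multiset.card_eq_zero] at hcard
        subst hcard
        simp only [Multiset.sum_zero] at hsum
        exact absurd hsum (h.nonzero x hx)
      · obtain ⟨t, rfl⟩ := Multiset.card_eq_one.mp hcard
        rw [Multiset.sum_singleton] at hsum
        rw [hsum]
        exact hm t (by simp)
    · obtain ⟨t, ht, hne, hxtΔ, hxts⟩ := extract h hx hm hsum (by omega)
      have hce : (m.erase t).card = n - 1 := by
        rw [Multiset.card_erase_of_mem ht, hcard, Nat.pred_eq_sub_one]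
      have hP : x - t ∈ Pos := ih (n-1) (by omega) (m.erase t) hce
        (fun s hs => hm s (Multiset.mem_of_mem_erase hs)) (x - t) hxtΔ hxts
      have := h.pos_add (x - t) hP t (hm t ht) (by simpa using hx)
      simpa using this

/-- A root which is a sum of ≥ 2 positive roots is a sum of two positive roots. -/
lemma lemP2 (h : GradedRootSystem Δ d Pos) {x : V} {m : Multiset V} (hx : x ∈ Δ)
    (hm : ∀ t ∈ m, t ∈ Pos) (hsum : x = m.sum) (hcard : 2 ≤ m.card) :
    ∃ a ∈ Pos, ∃ b ∈ Pos, x = a + b := by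
  obtain ⟨t, ht, hne, hxtΔ, hxts⟩ := extract h hx hm hsum hcard
  have hb : x - t ∈ Pos := lemP1 h (m.erase t).card (m.erase t) rfl
    (fun s hs => hm s (Multiset.mem_of_mem_erase hs)) (x - t) hxtΔ hxts
  exact ⟨t, hm t ht, x - t, hb, by abel⟩

/-- Elements of the Weyl group preserve the root system. -/
lemma weyl_maps (h : GradedRootSystem Δ d Pos) {u : V ≃ₗ[ℝ] V} (hu : u ∈ weyl Δ) :
    (∀ x ∈ Δ, u x ∈ Δ) ∧ (∀ x ∈ Δ, u.symm x ∈ Δ) := by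
  induction hu using Subgroup.closure_induction with
  | mem g hg =>
    obtain ⟨α, hα, rfl⟩ := hg
    have key : ∀ x ∈ Δ, sref α x ∈ Δ := by
      intro x hx
      rw [sref_apply (h.nonzero α hα) x]
      exact h.reflect_mem α hα x hx
    exact ⟨key, by rw [sref_symm]; exact key⟩
  | one => exact ⟨fun x hx => hx, fun x hx => hx⟩
  | mul u v hu hv ihu ihv =>
    refine ⟨fun x hx => ?_, fun x hx => ?_⟩
    · have : (u * v) x = u (v x) := rfl
      rw [this]
      exact ihu.1 _ (ihv.1 x hx)
    · have : (u * v).symm x = v.symm (u.symm x) := rfl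
      rw [this]
      exact ihv.2 _ (ihu.2 x hx)
  | inv u hu ihu =>
    refine ⟨fun x hx => ?_, fun x hx => ?_⟩
    · have : (u⁻¹) x = u.symm x := rfl
      rw [this]; exact ihu.2 x hx
    · have : (u⁻¹).symm x = u x := rfl
      rw [this]; exact ihu.1 x hx

end Stmt8Aux3
namespace Stmt8Aux4
open Stmt8Aux Stmt8Aux2 Stmt8Aux3
set_option linter.unusedSectionVars false
set_option linter.unusedVariables false
set_option maxHeartbeats 1000000

variable {Δ : Set V} {d : V → ℤ} {Pos : Set V} {J : Set V}

attribute [local instance] Classical.decEq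

lemma level_sub_pos (h : GradedRootSystem Δ d Pos) : level Δ d 1 ⊆ Pos :=
  fun x hx => h.compatible x hx.1 (le_of_eq hx.2.symm)

lemma pow_mem (h : GradedRootSystem Δ d Pos) (hJ : J ⊆ level Δ d 1) :
    ∀ (k : ℕ), ∀ x ∈ idealPow Δ J (k+1),
      x ∈ Δ ∧ d x = k+1 ∧ ∃ m : Multiset V, (∀ t ∈ m, t ∈ J) ∧ m.card = k+1 ∧ x = m.sum := by
  intro k
  induction k with
  | zero =>
    intro x hx
    have hx' : x ∈ J := hx
    have := hJ hx'
    exact ⟨this.1, by rw [this.2]; norm_num, {x}, by simpa using hx', by simp, by simp⟩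
  | succ k ih =>
    intro x hx
    obtain ⟨hxΔ, a, haJ, b, hb, rfl⟩ := hx
    obtain ⟨hbΔ, hbd, mb, hmb, hmbc, hmbs⟩ := ih b hb
    have haL := hJ haJ
    have hd : d (a + b) = (k:ℤ) + 1 + 1 := by
      rw [h.grade_add a haL.1 b hbΔ hxΔ, haL.2, hbd]
      push_cast
      ring
    refine ⟨hxΔ, by rw [hd]; push_cast; ring, a ::ₘ mb, ?_, by simp [hmbc], by simp [hmbs]⟩
    intro t ht
    rcases Multiset.mem_cons.mp ht with rfl | ht
    · exact haJ
    · exact hmb t ht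

lemma J_sub_pos (h : GradedRootSystem Δ d Pos) (hJ : J ⊆ level Δ d 1) : J ⊆ Pos :=
  fun x hx => level_sub_pos h (hJ hx)

/-- A root which is a sum of a multiset of `J` is in the corresponding power of `J`. -/
lemma sum_mem_pow (h : GradedRootSystem Δ d Pos) (hJ : J ⊆ level Δ d 1) :
    ∀ (n : ℕ) (m : Multiset V), m.card = n → 1 ≤ n → (∀ t ∈ m, t ∈ J) →
    ∀ x ∈ Δ, x = m.sum → x ∈ idealPow Δ J n := by
  intro n
  induction n using Nat.strong_induction_on with
  | _ n ih =>
    intro m hcard hn hm x hx hsum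
    rcases Nat.lt_or_ge n 2 with h2 | h2
    · have : n = 1 := by omega
      subst this
      obtain ⟨t, rfl⟩ := Multiset.card_eq_one.mp hcard
      rw [Multiset.sum_singleton] at hsum
      rw [hsum]
      exact hm t (by simp)
    · have hmP : ∀ t ∈ m, t ∈ Pos := fun t ht => J_sub_pos h hJ (hm t ht)
      obtain ⟨t, ht, hne, hxtΔ, hxts⟩ := extract h hx hmP hsum (by omega)
      have hce : (m.erase t).card = n - 1 := by
        rw [Multiset.card_erase_of_mem ht, hcard, Nat.pred_eq_sub_one]
      have hpow : x - t ∈ idealPow Δ J (n-1) := ih (n-1) (by omega) (m.erase t) hce (by omega)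
        (fun s hs => hm s (Multiset.mem_of_mem_erase hs)) (x - t) hxtΔ hxts
      obtain ⟨j, rfl⟩ : ∃ j, n = j + 2 := ⟨n - 2, by omega⟩
      show x ∈ idealPow Δ J (j + 2)
      have hj1 : j + 2 - 1 = j + 1 := by omega
      rw [hj1] at hpow
      exact ⟨hx, t, hm t ht, x - t, hpow, by abel⟩

lemma mem_gen_iff {x : V} : x ∈ gen Δ J ↔ ∃ k : ℕ, x ∈ idealPow Δ J (k+1) :=
  Set.mem_iUnion

lemma J_sub_gen {x : V} (hx : x ∈ J) : x ∈ gen Δ J :=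
  mem_gen_iff.mpr ⟨0, hx⟩

lemma gen_props (h : GradedRootSystem Δ d Pos) (hJ : J ⊆ level Δ d 1) {x : V}
    (hx : x ∈ gen Δ J) :
    x ∈ Δ ∧ 1 ≤ d x ∧ ∃ m : Multiset V, (∀ t ∈ m, t ∈ J) ∧ (m.card : ℤ) = d x ∧ x = m.sum := by
  obtain ⟨k, hk⟩ := mem_gen_iff.mp hx
  obtain ⟨hxΔ, hxd, m, hm, hmc, hms⟩ := pow_mem h hJ k x hk
  exact ⟨hxΔ, by omega, m, hm, by rw [hmc]; push_cast; omega, hms⟩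

lemma gen_level1 (h : GradedRootSystem Δ d Pos) (hJ : J ⊆ level Δ d 1) {x : V}
    (hx : x ∈ gen Δ J) (hd : d x = 1) : x ∈ J := by
  obtain ⟨k, hk⟩ := mem_gen_iff.mp hx
  obtain ⟨hxΔ, hxd, -⟩ := pow_mem h hJ k x hk
  have : k = 0 := by omega
  subst this
  exact hk

/-- Every positive root of level 0 is a sum of simple roots of `Δ(0)⁺`. -/
lemma pos0_closure (h : GradedRootSystem Δ d Pos) :
    ∀ ε ∈ pos0 d Pos, ε ∈ AddSubmonoid.closure (simpleRoots (pos0 d Pos)) := by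
  have hfin : (pos0 d Pos).Finite := h.finite.subset (fun x hx => h.pos_subset hx.1)
  haveI : Finite (pos0 d Pos) := hfin.to_subtype
  let r : (pos0 d Pos) → (pos0 d Pos) → Prop := fun p q => ((q : V) - p) ∈ Pos
  haveI hirr : IsIrrefl (pos0 d Pos) (Relation.TransGen r) := by
    constructor
    intro a hcyc
    have key : ∀ {y : pos0 d Pos}, Relation.TransGen r a y →
        ∃ m : Multiset V, m ≠ 0 ∧ (∀ t ∈ m, t ∈ Pos) ∧ (y : V) - a = m.sum := by
      intro y hxy
      induction hxy with
      | single hr =>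
        exact ⟨{_ - _}, by simp, by intro t ht; rw [Multiset.mem_singleton] at ht; subst ht; exact hr, by simp⟩
      | @tail b c hxy hr ih =>
        obtain ⟨m, hne, hm, hsum⟩ := ih
        refine ⟨((c : V) - b) ::ₘ m, by simp, ?_, ?_⟩
        · intro t ht
          rcases Multiset.mem_cons.mp ht with rfl | ht
          · exact hr
          · exact hm t ht
        · rw [Multiset.sum_cons, ← hsum]; abel
    obtain ⟨m, hne, hm, hsum⟩ := key hcyc
    rw [sub_self] at hsum
    exact lemS h m.card m rfl hm hne hsum.symm
  have hwf : WellFounded r :=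
    Subrelation.wf (fun hxy => Relation.TransGen.single hxy)
      (Finite.wellFounded_of_trans_of_irrefl (Relation.TransGen r))
  have main : ∀ p : pos0 d Pos, (p : V) ∈ AddSubmonoid.closure (simpleRoots (pos0 d Pos)) := by
    intro p
    induction p using WellFounded.induction hwf with
    | _ q ihq =>
      by_cases hq : (q : V) ∈ simpleRoots (pos0 d Pos)
      · exact AddSubmonoid.subset_closure hq
      · have hq2 : ∃ a ∈ pos0 d Pos, ∃ b ∈ pos0 d Pos, (q : V) = a + b := by
          by_contra hc
          exact hq ⟨q.2, hc⟩
        obtain ⟨a, ha, b, hb, hab⟩ := hq2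
        have hra : r ⟨a, ha⟩ q := by
          show (q : V) - a ∈ Pos
          rw [hab]
          simpa using hb.1
        have hrb : r ⟨b, hb⟩ q := by
          show (q : V) - b ∈ Pos
          rw [hab]
          simpa using ha.1
        have := AddSubmonoid.add_mem _ (ihq ⟨a, ha⟩ hra) (ihq ⟨b, hb⟩ hrb)
        rwa [← hab] at this
  intro ε hε
  exact main ⟨ε, hε⟩

end Stmt8Aux4
namespace Stmt8Aux5
open Stmt8Aux Stmt8Aux2 Stmt8Aux3 Stmt8Aux4
set_option linter.unusedSectionVars false
set_option linter.unusedVariables false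
set_option maxHeartbeats 1000000

variable {Δ : Set V} {d : V → ℤ} {Pos : Set V} {J : Set V}

attribute [local instance] Classical.decEq

/-- `J^m` absorbs addition of a positive level-0 root (when the result is a root). -/
lemma lemE (h : GradedRootSystem Δ d Pos) (hJ : J ⊆ level Δ d 1)
    (hUp : ∀ τ ∈ J, ∀ y ∈ level Δ d 1, leLevel d Pos τ y → y ∈ J) :
    ∀ (n : ℕ) (m : Multiset V), m.card = n → 1 ≤ n → (∀ t ∈ m, t ∈ J) →
    ∀ ε ∈ pos0 d Pos, ∀ y ∈ Δ, y = m.sum + ε → y ∈ idealPow Δ J n := by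
  intro n
  induction n using Nat.strong_induction_on with
  | _ n ih =>
    intro m hcard hn hm ε hε y hy hysum
    have hεP : ε ∈ Pos := hε.1
    have hεΔ : ε ∈ Δ := h.pos_subset hεP
    have hεd : d ε = 0 := hε.2
    have hεcl : ε ∈ AddSubmonoid.closure (simpleRoots (pos0 d Pos)) := pos0_closure h ε hε
    have hmP : ∀ t ∈ m, t ∈ Pos := fun t ht => J_sub_pos h hJ (hm t ht)
    have hJup : ∀ τ ∈ J, ∀ z ∈ Δ, z = τ + ε → z ∈ J := by
      intro τ hτ z hz hzs
      have hτL := hJ hτ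
      have hzd : d z = 1 := by
        rw [hzs, h.grade_add τ hτL.1 ε hεΔ (hzs ▸ hz), hτL.2, hεd]
        ring
      refine hUp τ hτ z ⟨hz, hzd⟩ ?_
      show z - τ ∈ _
      rw [hzs]
      simpa using hεcl
    rcases Nat.lt_or_ge n 2 with h2 | h2
    · have : n = 1 := by omega
      subst this
      obtain ⟨τ, rfl⟩ := Multiset.card_eq_one.mp hcard
      rw [Multiset.sum_singleton] at hysum
      show y ∈ J
      exact hJup τ (hm τ (by simp)) y hy hysum
    · rcases lt_or_ge ⟪ε, m.sum⟫ 0 with hroute | hroute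
      · -- some τ with ⟨ε,τ⟩ < 0 : replace τ by τ + ε
        obtain ⟨τ, hτm, hτε⟩ := exists_neg_inner hroute
        have hτJ := hm τ hτm
        have hτL := hJ hτJ
        have hτne : τ ≠ -ε := by
          intro he
          have : d τ = 0 := by rw [he, h.grade_neg ε hεΔ, hεd]; ring
          rw [hτL.2] at this
          exact one_ne_zero this
        have hτεΔ : τ + ε ∈ Δ := lemA' h hτL.1 hεΔ (by rwa [real_inner_comm]) hτne
        have hτεJ : τ + ε ∈ J := hJup τ hτJ (τ + ε) hτεΔ rfl
        set m' : Multiset V := (τ + ε) ::ₘ m.erase τ with hm'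
        have hm'J : ∀ t ∈ m', t ∈ J := by
          intro t ht
          rcases Multiset.mem_cons.mp ht with rfl | ht
          · exact hτεJ
          · exact hm t (Multiset.mem_of_mem_erase ht)
        have hm'c : m'.card = n := by
          rw [hm', Multiset.card_cons, Multiset.card_erase_of_mem hτm, hcard,
            Nat.pred_eq_sub_one]
          omega
        have hm's : y = m'.sum := by
          rw [hm', Multiset.sum_cons, hysum]
          have : m.sum = τ + (m.erase τ).sum := by
            rw [← Multiset.sum_cons, Multiset.cons_erase hτm]
          rw [this]
          abel
        exact sum_mem_pow h hJ n m' hm'c hn hm'J y hy hm's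
      · -- extract a τ with ⟨y,τ⟩ > 0
        have hyy : 0 < ⟪y, y⟫ := inner_self_pos' (h.nonzero y hy)
        have hεε : 0 < ⟪ε, ε⟫ := inner_self_pos' (h.nonzero ε hεΔ)
        have hkey : ⟪ε, m.sum⟫ = ⟪y, ε⟫ - ⟪ε, ε⟫ := by
          rw [hysum, inner_add_left, real_inner_comm ε m.sum]
          ring
        have hyε : 0 < ⟪y, ε⟫ := by linarith
        have hyne : y ≠ ε := by
          intro he
          have hthis : ε = m.sum + ε := by nth_rewrite 1 [← he]; exact hysum
          have h0 : m.sum = 0 := right_eq_add.mp hthis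
          have hmne : m ≠ 0 := by
            intro hc
            rw [hc] at hcard
            simp at hcard
            omega
          exact lemS h m.card m rfl hmP hmne h0
        have hlt : ⟪y, ε⟫ < ⟪y, y⟫ := by
          by_contra hge
          push_neg at hge
          obtain ⟨n1, hn1⟩ := h.crystallographic ε hεΔ y hy
          obtain ⟨m1, hm1⟩ := h.crystallographic y hy ε hεΔ
          have hn1o : 1 ≤ n1 := by
            have : (0:ℝ) < (n1:ℝ) := by rw [hn1]; positivity
            exact_mod_cast this
          have hm1o : 2 ≤ m1 := by
            have : (2:ℝ) ≤ (m1:ℝ) := by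
              rw [hm1, le_div_iff₀ hyy]
              have hcomm := real_inner_comm ε y
              linarith
            exact_mod_cast this
          have hcs := cs_strict h hy hεΔ hyε hyne
          have hprod : (n1:ℝ) * (m1:ℝ) < 4 := by
            rw [hn1, hm1, div_mul_div_comm, div_lt_iff₀ (by positivity)]
            nlinarith [real_inner_comm ε y]
          have hprod' : n1 * m1 < 4 := by exact_mod_cast hprod
          have hn1e : n1 = 1 := by nlinarith
          have h2ye : 2 * ⟪y, ε⟫ = ⟪ε, ε⟫ := by
            rw [hn1e] at hn1
            field_simp at hn1
            simp only [Int.cast_one, one_mul] at hn1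
            linarith
          linarith
        have hsum' : 0 < ⟪y, m.sum⟫ := by
          have h3 : ⟪y, m.sum⟫ = ⟪y, y⟫ - ⟪y, ε⟫ := by
            rw [hysum, inner_add_right]; ring
          linarith
        obtain ⟨τ, hτm, hτp⟩ := exists_pos_inner hsum'
        have hτJ := hm τ hτm
        have hτΔ := (hJ hτJ).1
        have hyτ : y ≠ τ := by
          intro he
          have h0 : (m.erase τ).sum + ε = 0 := by
            have hms : m.sum = τ + (m.erase τ).sum := by
              rw [← Multiset.sum_cons, Multiset.cons_erase hτm]
            have h5 : τ = τ + ((m.erase τ).sum + ε) := by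
              rw [← add_assoc, ← hms, ← hysum, he]
            exact left_eq_add.mp h5
          set m2 : Multiset V := ε ::ₘ m.erase τ with hm2
          have : m2.sum = 0 := by rw [hm2, Multiset.sum_cons, ← h0]; abel
          refine lemS h m2.card m2 rfl ?_ (by simp [hm2]) this
          intro t ht
          rcases Multiset.mem_cons.mp ht with rfl | ht
          · exact hεP
          · exact hmP t (Multiset.mem_of_mem_erase ht)
        have hyτΔ : y - τ ∈ Δ := lemA h hy hτΔ hτp hyτ
        have hyτs : y - τ = (m.erase τ).sum + ε := by
          have hms : m.sum = τ + (m.erase τ).sum := by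
            rw [← Multiset.sum_cons, Multiset.cons_erase hτm]
          rw [hysum, hms]
          abel
        have hce : (m.erase τ).card = n - 1 := by
          rw [Multiset.card_erase_of_mem hτm, hcard, Nat.pred_eq_sub_one]
        have hpow : y - τ ∈ idealPow Δ J (n-1) := ih (n-1) (by omega) (m.erase τ) hce (by omega)
          (fun s hs => hm s (Multiset.mem_of_mem_erase hs)) ε hε (y - τ) hyτΔ hyτs
        obtain ⟨j, rfl⟩ : ∃ j, n = j + 2 := ⟨n - 2, by omega⟩
        show y ∈ idealPow Δ J (j + 2)
        have hj1 : j + 2 - 1 = j + 1 := by omega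
        rw [hj1] at hpow
        exact ⟨hy, τ, hτJ, y - τ, hpow, by abel⟩

end Stmt8Aux5
open Stmt8Aux Stmt8Aux2 Stmt8Aux3 Stmt8Aux4 Stmt8Aux5 in
set_option maxHeartbeats 2000000 in
/-- If `w = w_{I,max}` (the element of `W⁰` with `N(w) = Δ(≥1) \\ ⟨Iᶜ⟩`), then for
`γ ∈ Δ(1)`, `γ` is a minimal element of `Δ(1) \\ I` iff `w(γ) ∈ Π`. -/
theorem stmt8 (Δ : Set V) (d : V → ℤ) (Pos : Set V)
    (h : GradedRootSystem Δ d Pos) (I : Set V)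
    (hI : IsLowerIdeal Δ d Pos 1 I)
    (w : V ≃ₗ[ℝ] V) (hw : w ∈ W0 Δ d Pos)
    (hN : invSet Pos w = levelGE Δ d 1 \ gen Δ (level Δ d 1 \ I)) :
    ∀ γ ∈ level Δ d 1,
      ((γ ∈ level Δ d 1 \ I ∧ ∀ ν ∈ level Δ d 1 \ I, leLevel d Pos ν γ → ν = γ) ↔
        w γ ∈ simpleRoots Pos) := by
  classical
  intro γ hγL
  have hγΔ : γ ∈ Δ := hγL.1
  have hγd : d γ = 1 := hγL.2
  set J : Set V := level Δ d 1 \ I with hJdef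
  have hJlev : J ⊆ level Δ d 1 := fun x hx => hx.1
  have hUp : ∀ τ ∈ J, ∀ y ∈ level Δ d 1, leLevel d Pos τ y → y ∈ J := by
    intro τ hτ y hy hle
    exact ⟨hy, fun hyI => hτ.2 (hI.2 y hyI τ hτ.1 hle)⟩
  obtain ⟨hwW, hw0⟩ := hw
  obtain ⟨hmap, hmapinv⟩ := weyl_maps h hwW
  have posneg : ∀ z ∈ Δ, (z ∉ Pos ↔ -z ∈ Pos) := by
    intro z hz
    have := h.pos_iff z hz
    tauto
  have hgenPos : ∀ x ∈ Δ, 1 ≤ d x → (x ∈ gen Δ J ↔ w x ∈ Pos) := by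
    intro x hx hdx
    have hxP : x ∈ Pos := h.compatible x hx hdx
    have hwxΔ : w x ∈ Δ := hmap x hx
    constructor
    · intro hgen
      have hnotinv : x ∉ invSet Pos w := by rw [hN]; exact fun hc => hc.2 hgen
      have h1 : ¬ (-(w x) ∈ Pos) := fun hc => hnotinv ⟨hxP, hc⟩
      by_contra hc
      exact h1 ((posneg (w x) hwxΔ).mp hc)
    · intro hwx
      by_contra hgen
      have hinv : x ∈ invSet Pos w := by rw [hN]; exact ⟨⟨hx, hdx⟩, hgen⟩
      exact ((h.pos_iff (w x) hwxΔ).mp hwx) hinv.2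
  have hJPos : ∀ x ∈ level Δ d 1, (x ∈ J ↔ w x ∈ Pos) := by
    intro x hx
    constructor
    · intro hxJ
      exact (hgenPos x hx.1 (le_of_eq hx.2.symm)).mp (J_sub_gen hxJ)
    · intro hwx
      exact gen_level1 h hJlev ((hgenPos x hx.1 (le_of_eq hx.2.symm)).mpr hwx) hx.2
  have closmul : ∀ x ∈ AddSubmonoid.closure (simpleRoots (pos0 d Pos)),
      ∃ m : Multiset V, (∀ t ∈ m, t ∈ simpleRoots (pos0 d Pos)) ∧ x = m.sum := by
    intro x hx
    induction hx using AddSubmonoid.closure_induction with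
    | mem y hy => exact ⟨{y}, by simpa using hy, by simp⟩
    | zero => exact ⟨0, by simp, by simp⟩
    | add a b ha hb iha ihb =>
      obtain ⟨ma, hma, hsa⟩ := iha
      obtain ⟨mb, hmb, hsb⟩ := ihb
      refine ⟨ma + mb, ?_, by rw [Multiset.sum_add, hsa, hsb]⟩
      intro t ht
      rcases Multiset.mem_add.mp ht with ht | ht
      · exact hma t ht
      · exact hmb t ht
  constructor
  · -- minimal ⇒ simple
    rintro ⟨hγJ, hmin⟩
    have hwγP : w γ ∈ Pos := (hJPos γ hγL).mp hγJ
    refine ⟨hwγP, ?_⟩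
    rintro ⟨a, haP, b, hbP, hab⟩
    -- claim: no decomposition with d(w⁻¹ b) = k+1 exists
    have claim : ∀ (k : ℕ), ∀ a ∈ Pos, ∀ b ∈ Pos, w γ = a + b →
        d (w.symm b) = (k:ℤ)+1 → False := by
      intro k
      induction k using Nat.strong_induction_on with
      | _ n ih =>
        intro a haP b hbP hab hdb
        set μ : V := w.symm a with hμdef
        set ν : V := w.symm b with hνdef
        have hμΔ : μ ∈ Δ := hmapinv a (h.pos_subset haP)
        have hνΔ : ν ∈ Δ := hmapinv b (h.pos_subset hbP)
        have hwμ : w μ = a := w.apply_symm_apply a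
        have hwν : w ν = b := w.apply_symm_apply b
        have hγμν : γ = μ + ν := by
          have := congrArg w.symm hab
          rw [w.symm_apply_apply, map_add] at this
          exact this
        have hdμν : d μ + d ν = 1 := by
          rw [← h.grade_add μ hμΔ ν hνΔ (hγμν ▸ hγΔ), ← hγμν, hγd]
        have hdν : d ν = (n:ℤ) + 1 := hdb
        have hdμ : d μ = -(n:ℤ) := by omega
        have hνgen : ν ∈ gen Δ J := by
          refine (hgenPos ν hνΔ (by omega)).mpr ?_
          rw [hwν]; exact hbP
        rcases Nat.eq_zero_or_pos n with rfl | hn1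
        · -- base case: d μ = 0
          have hμpos0 : μ ∈ pos0 d Pos := by
            by_contra hc
            have hμnP : μ ∉ Pos := fun hc2 => hc ⟨hc2, by omega⟩
            have hnμ : -μ ∈ pos0 d Pos := by
              refine ⟨(posneg μ hμΔ).mp hμnP, ?_⟩
              rw [h.grade_neg μ hμΔ]; omega
            have := hw0 (-μ) hnμ
            rw [map_neg, hwμ] at this
            exact ((h.pos_iff a (h.pos_subset haP)).mp haP) this
          have hνJ : ν ∈ J := gen_level1 h hJlev hνgen (by omega)
          have hνγ : ν = γ := by
            refine hmin ν hνJ ?_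
            show γ - ν ∈ _
            have : γ - ν = μ := by rw [hγμν]; abel
            rw [this]
            exact pos0_closure h μ hμpos0
          have hμ0 : μ = 0 := by
            have h2 : γ = μ + γ := by nth_rewrite 2 [← hνγ]; exact hγμν
            exact right_eq_add.mp h2
          exact h.nonzero μ hμΔ hμ0
        · -- inductive step: d ν = n+1 ≥ 2
          obtain ⟨k', hk'⟩ := mem_gen_iff.mp hνgen
          have hk'n : k' = n := by
            have := (pow_mem h hJlev k' ν hk').2.1
            omega
          rw [hk'n] at hk'
          obtain ⟨j, rfl⟩ : ∃ j, n = j + 1 := ⟨n - 1, by omega⟩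
          -- ν ∈ idealPow Δ J (j+2)
          obtain ⟨hνΔ2, τ, hτJ, ν', hν'pow, hνsum⟩ := hk'
          have hτΔ : τ ∈ Δ := (hJlev hτJ).1
          have hτd : d τ = 1 := (hJlev hτJ).2
          obtain ⟨hν'Δ, hν'd, mν', hmν'J, hmν'c, hmν's⟩ := pow_mem h hJlev j ν' hν'pow
          have hν'gen : ν' ∈ gen Δ J := mem_gen_iff.mpr ⟨j, hν'pow⟩
          have hwν'P : w ν' ∈ Pos := (hgenPos ν' hν'Δ (by omega)).mp hν'gen
          set β : V := -μ with hβdef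
          have hβΔ : β ∈ Δ := h.neg_mem μ hμΔ
          have hβd : d β = (j:ℤ) + 1 := by
            rw [hβdef, h.grade_neg μ hμΔ]
            omega
          have hβP : β ∈ Pos := h.compatible β hβΔ (by omega)
          have hβinv : β ∈ invSet Pos w := by
            refine ⟨hβP, ?_⟩
            rw [hβdef, map_neg, hwμ, neg_neg]
            exact haP
          have hβgen : β ∉ gen Δ J := by
            rw [hN] at hβinv
            exact hβinv.2
          have heq : τ + ν' = γ + β := by
            rw [hγμν, ← hνsum, hβdef]; abel
          have hγν : 0 < ⟪ν, ν⟫ := inner_self_pos' (h.nonzero ν hνΔ)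
          have hexp : ⟪τ, γ⟫ + ⟪τ, β⟫ + ⟪ν', γ⟫ + ⟪ν', β⟫ = ⟪ν, ν⟫ := by
            have h1 : ⟪ν, ν⟫ = ⟪τ + ν', γ + β⟫ := by
              rw [← heq, ← hνsum]
            rw [h1, inner_add_left, inner_add_right, inner_add_right]
            ring
          have hone : 0 < ⟪τ, γ⟫ ∨ 0 < ⟪τ, β⟫ ∨ 0 < ⟪ν', γ⟫ ∨ 0 < ⟪ν', β⟫ := by
            by_contra hc
            push_neg at hc
            obtain ⟨h1, h2, h3, h4⟩ := hc
            linarith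
          -- helper for new decompositions
          have newdec : w (γ - ν') ∈ Pos → False := by
            intro hwp
            refine ih j (by omega) (w (γ - ν')) hwp (w ν') hwν'P ?_ ?_
            · rw [← map_add]
              congr 1
              abel
            · rw [w.symm_apply_apply, hν'd]
          rcases hone with hip | hip | hip | hip
          · -- case (a) : 0 < ⟪τ,γ⟫
            have hτγ : τ ≠ γ := by
              intro he
              apply hβgen
              have : ν' = β := by
                have := heq
                rw [he] at this
                exact add_left_cancel this
              rw [← this]
              exact hν'gen
            have hδΔ : γ - τ ∈ Δ :=
              lemA h hγΔ hτΔ (by rwa [real_inner_comm]) (fun he => hτγ he.symm)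
            have hδd : d (γ - τ) = 0 := by
              have h2 : τ + (γ - τ) = γ := by abel
              have h3 := h.grade_add τ hτΔ (γ - τ) hδΔ (by rw [h2]; exact hγΔ)
              rw [h2] at h3
              omega
            by_cases hδP : γ - τ ∈ Pos
            · exact hτγ (hmin τ hτJ (pos0_closure h (γ - τ) ⟨hδP, hδd⟩))
            · have hε : τ - γ ∈ pos0 d Pos := by
                have := (posneg (γ - τ) hδΔ).mp hδP
                rw [neg_sub] at this
                refine ⟨this, ?_⟩
                have : τ - γ = -(γ - τ) := by abel
                rw [this, h.grade_neg (γ - τ) hδΔ, hδd]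
                ring
              have hβsum : β = mν'.sum + (τ - γ) := by
                rw [← hmν's]
                have : β = τ + ν' - γ := by rw [heq]; abel
                rw [this]; abel
              have := lemE h hJlev hUp (j+1) mν' hmν'c (by omega) hmν'J (τ - γ) hε β hβΔ hβsum
              exact hβgen (mem_gen_iff.mpr ⟨j, this⟩)
          · -- case (b) : 0 < ⟪τ,β⟫
            have hτβ : β ≠ τ := fun he => hβgen (he ▸ J_sub_gen hτJ)
            have hζΔ : β - τ ∈ Δ := lemA h hβΔ hτΔ (by rwa [real_inner_comm]) hτβ
            have hζd : d (β - τ) = (j:ℤ) := by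
              have h2 : τ + (β - τ) = β := by abel
              have h3 := h.grade_add τ hτΔ (β - τ) hζΔ (by rw [h2]; exact hβΔ)
              rw [h2] at h3
              omega
            have hγν'ζ : γ - ν' = -(β - τ) := by
              have : γ = τ + ν' - β := by rw [heq]; abel
              rw [this]; abel
            rcases Nat.eq_zero_or_pos j with rfl | hj1
            · -- dζ = 0
              by_cases hζP : β - τ ∈ Pos
              · -- β ∈ J, contradiction
                have hβJ : β ∈ J := by
                  refine hUp τ hτJ β ⟨hβΔ, by omega⟩ ?_
                  show β - τ ∈ _
                  exact pos0_closure h (β - τ) ⟨hζP, by omega⟩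
                exact hβgen (J_sub_gen hβJ)
              · have hnζ : -(β - τ) ∈ pos0 d Pos := by
                  refine ⟨(posneg (β - τ) hζΔ).mp hζP, ?_⟩
                  rw [h.grade_neg (β - τ) hζΔ]; omega
                apply newdec
                rw [hγν'ζ]
                exact hw0 (-(β - τ)) hnζ
            · -- dζ = j ≥ 1
              by_cases hζgen : β - τ ∈ gen Δ J
              · -- β is a sum of j+1 elements of J: contradiction
                obtain ⟨kζ, hkζ⟩ := mem_gen_iff.mp hζgen
                have hkζj : kζ + 1 = j := by
                  have := (pow_mem h hJlev kζ (β - τ) hkζ).2.1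
                  omega
                obtain ⟨hζΔ2, hζd2, mζ, hmζJ, hmζc, hmζs⟩ := pow_mem h hJlev kζ (β - τ) hkζ
                have hβs : β = (τ ::ₘ mζ).sum := by
                  rw [Multiset.sum_cons, ← hmζs]; abel
                have : β ∈ idealPow Δ J (j+1) := by
                  refine sum_mem_pow h hJlev (j+1) (τ ::ₘ mζ) ?_ (by omega) ?_ β hβΔ hβs
                  · rw [Multiset.card_cons, hmζc]; omega
                  · intro t ht
                    rcases Multiset.mem_cons.mp ht with rfl | ht
                    · exact hτJ
                    · exact hmζJ t ht
                exact hβgen (mem_gen_iff.mpr ⟨j, this⟩)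
              · have hwζ : w (β - τ) ∉ Pos := by
                  intro hc
                  exact hζgen ((hgenPos (β - τ) hζΔ (by omega)).mpr hc)
                apply newdec
                rw [hγν'ζ, map_neg]
                exact (posneg (w (β - τ)) (hmap _ hζΔ)).mp hwζ
          · -- case (c) : 0 < ⟪ν',γ⟫
            have hν'γ : ν' ≠ γ := by
              intro he
              apply hβgen
              have hβτ : β = τ := by
                have := heq
                rw [he] at this
                have h2 : γ + τ = γ + β := by rw [← this]; abel
                exact (add_left_cancel h2).symm
              rw [hβτ]
              exact J_sub_gen hτJ
            have hζΔ : ν' - γ ∈ Δ := lemA h hν'Δ hγΔ hip hν'γ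
            have hζd : d (ν' - γ) = (j:ℤ) := by
              have h2 : γ + (ν' - γ) = ν' := by abel
              have h3 := h.grade_add γ hγΔ (ν' - γ) hζΔ (by rw [h2]; exact hν'Δ)
              rw [h2] at h3
              omega
            have hβτζ : β = τ + (ν' - γ) := by
              have h2 : β = τ + ν' - γ := by rw [heq]; abel
              rw [h2]; abel
            rcases Nat.eq_zero_or_pos j with rfl | hj1
            · by_cases hζP : ν' - γ ∈ Pos
              · have hβJ : β ∈ J := by
                  refine hUp τ hτJ β ⟨hβΔ, by omega⟩ ?_
                  show β - τ ∈ _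
                  have h2 : β - τ = ν' - γ := by rw [hβτζ]; abel
                  rw [h2]
                  exact pos0_closure h (ν' - γ) ⟨hζP, by omega⟩
                exact hβgen (J_sub_gen hβJ)
              · have hν'J : ν' ∈ J := gen_level1 h hJlev hν'gen (by omega)
                have hγν'p : γ - ν' ∈ pos0 d Pos := by
                  have h2 := (posneg (ν' - γ) hζΔ).mp hζP
                  rw [neg_sub] at h2
                  refine ⟨h2, ?_⟩
                  have he2 : γ - ν' = -(ν' - γ) := by abel
                  rw [he2, h.grade_neg (ν' - γ) hζΔ]
                  omega
                exact hν'γ (hmin ν' hν'J (pos0_closure h (γ - ν') hγν'p))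
            · by_cases hζgen : ν' - γ ∈ gen Δ J
              · obtain ⟨kζ, hkζ⟩ := mem_gen_iff.mp hζgen
                obtain ⟨hζΔ2, hζd2, mζ, hmζJ, hmζc, hmζs⟩ := pow_mem h hJlev kζ (ν' - γ) hkζ
                have hβs : β = (τ ::ₘ mζ).sum := by
                  rw [Multiset.sum_cons, ← hmζs, hβτζ]
                have hβpow : β ∈ idealPow Δ J (j+1) := by
                  refine sum_mem_pow h hJlev (j+1) (τ ::ₘ mζ) ?_ (by omega) ?_ β hβΔ hβs
                  · rw [Multiset.card_cons, hmζc]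
                    omega
                  · intro t ht
                    rcases Multiset.mem_cons.mp ht with rfl | ht
                    · exact hτJ
                    · exact hmζJ t ht
                exact hβgen (mem_gen_iff.mpr ⟨j, hβpow⟩)
              · have hwζ : w (ν' - γ) ∉ Pos := fun hc =>
                  hζgen ((hgenPos (ν' - γ) hζΔ (by omega)).mpr hc)
                apply newdec
                have h2 : γ - ν' = -(ν' - γ) := by abel
                rw [h2, map_neg]
                exact (posneg (w (ν' - γ)) (hmap _ hζΔ)).mp hwζ
          · -- case (d) : 0 < ⟪ν',β⟫
            have hν'β : β ≠ ν' := fun he => hβgen (he ▸ hν'gen)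
            have hξΔ : β - ν' ∈ Δ := lemA h hβΔ hν'Δ (by rwa [real_inner_comm]) hν'β
            have hξd : d (β - ν') = 0 := by
              have h2 : ν' + (β - ν') = β := by abel
              have h3 := h.grade_add ν' hν'Δ (β - ν') hξΔ (by rw [h2]; exact hβΔ)
              rw [h2] at h3
              omega
            have hξτγ : β - ν' = τ - γ := by
              have h2 : β = τ + ν' - γ := by rw [heq]; abel
              rw [h2]; abel
            by_cases hξP : β - ν' ∈ Pos
            · have hβs : β = mν'.sum + (β - ν') := by rw [← hmν's]; abel
              have hβpow := lemE h hJlev hUp (j+1) mν' hmν'c (by omega) hmν'J (β - ν')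
                ⟨hξP, hξd⟩ β hβΔ hβs
              exact hβgen (mem_gen_iff.mpr ⟨j, hβpow⟩)
            · have hγτp : γ - τ ∈ pos0 d Pos := by
                have h2 := (posneg (β - ν') hξΔ).mp hξP
                rw [hξτγ, neg_sub] at h2
                refine ⟨h2, ?_⟩
                have he2 : γ - τ = -(β - ν') := by rw [hξτγ]; abel
                rw [he2, h.grade_neg (β - ν') hξΔ, hξd]
                ring
              have hτγ2 : τ = γ := hmin τ hτJ (pos0_closure h (γ - τ) hγτp)
              have h0 : β - ν' = 0 := by rw [hξτγ, hτγ2]; abel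
              exact h.nonzero (β - ν') hξΔ h0
    -- conclude from the claim
    have hμν : γ = w.symm a + w.symm b := by
      have := congrArg w.symm hab
      rw [w.symm_apply_apply, map_add] at this
      exact this
    have haΔ : w.symm a ∈ Δ := hmapinv a (h.pos_subset haP)
    have hbΔ : w.symm b ∈ Δ := hmapinv b (h.pos_subset hbP)
    have hsum : d (w.symm a) + d (w.symm b) = 1 := by
      rw [← h.grade_add _ haΔ _ hbΔ (hμν ▸ hγΔ), ← hμν, hγd]
    rcases le_or_gt 1 (d (w.symm b)) with hd | hd
    · exact claim (d (w.symm b) - 1).toNat a haP b hbP hab (by omega)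
    · have hd' : 1 ≤ d (w.symm a) := by omega
      exact claim (d (w.symm a) - 1).toNat b hbP a haP (by rw [hab]; abel) (by omega)
  · -- simple ⇒ minimal
    intro hsimple
    have hγJ : γ ∈ J := (hJPos γ hγL).mpr hsimple.1
    refine ⟨hγJ, ?_⟩
    intro ν hν hle
    obtain ⟨m0, hm0S, hm0s⟩ := closmul (γ - ν) hle
    rcases Multiset.empty_or_exists_mem m0 with rfl | ⟨t0, ht0⟩
    · have h0 : γ - ν = 0 := by simpa using hm0s
      exact (sub_eq_zero.mp h0).symm
    · exfalso
      set M : Multiset V := w ν ::ₘ m0.map w with hM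
      have hMP : ∀ t ∈ M, t ∈ Pos := by
        intro t ht
        rcases Multiset.mem_cons.mp ht with rfl | ht
        · exact (hJPos ν hν.1).mp hν
        · obtain ⟨s, hs, rfl⟩ := Multiset.mem_map.mp ht
          exact hw0 s (hm0S s hs).1
      have hMs : w γ = M.sum := by
        rw [hM, Multiset.sum_cons]
        have h1 : (m0.map (⇑w)).sum = w m0.sum := (map_multiset_sum w m0).symm
        have h2 : γ = ν + m0.sum := by rw [← hm0s]; abel
        rw [h1, ← map_add, ← h2]
      have hMc : 2 ≤ M.card := by
        rw [hM, Multiset.card_cons, Multiset.card_map]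
        have : 0 < m0.card := Multiset.card_pos.mpr (by intro hc; rw [hc] at ht0; simp at ht0)
        omega
      obtain ⟨p, hp, q, hq, hpq⟩ := lemP2 h (hmap γ hγΔ) hMP hMs hMc
      exact hsimple.2 ⟨p, hp, q, hq, hpq⟩
end

section
/- Let τ : W⁰ → J₋(Δ(1)) be the map w ↦ N(w) ∩ Δ(1). Then τ is surjective, and for each lower ideal I of Δ(1), the fiber τ⁻¹(I) is an interval in the weak Bruhat order on W⁰: τ⁻¹(I) = {w ∈ W⁰ : w_{I,min} ≤ w ≤ w_{I,max}}, where w ≤ w' means N(w) ⊆ N(w'). -/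
open RealInnerProductSpace

variable {V : Type*} [NormedAddCommGroup V] [InnerProductSpace ℝ V] [FiniteDimensional ℝ V]

set_option linter.unusedSectionVars false
set_option linter.deprecated false
open scoped Classical
set_option maxHeartbeats 1000000

theorem inner_self_pos' {x : V} (hx : x ≠ 0) : (0:ℝ) < ⟪x, x⟫ := by
  have h1 : ‖x‖ > 0 := norm_pos_iff.mpr hx
  nlinarith [real_inner_self_eq_norm_sq x]

theorem sref_apply' (α x : V) (hα : α ≠ 0) : sref α x = x - (2 * ⟪x, α⟫ / ⟪α, α⟫) • α := by
  have hn : (0:ℝ) < ⟪α,α⟫ := inner_self_pos' hα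
  show (Submodule.reflection ((ℝ ∙ α)ᗮ)) x = _
  rw [Submodule.reflection_apply, Submodule.starProjection_orthogonal_val, Submodule.starProjection_singleton,
    real_inner_comm α x, ← real_inner_self_eq_norm_sq]
  match_scalars
  all_goals try simp only [RCLike.ofReal_real_eq_id, id_eq]
  all_goals try field_simp
  all_goals ring

theorem sref_sref (α : V) (x : V) : sref α (sref α x) = x := Submodule.reflection_reflection _ x

theorem sref_self (α : V) (hα : α ≠ 0) : sref α α = -α := by
  have hn : (0:ℝ) < ⟪α,α⟫ := inner_self_pos' hα
  rw [sref_apply' α α hα, mul_div_assoc, div_self hn.ne', mul_one, two_smul]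
  abel

/-- Roots expressible as a nonempty sum of elements of `I`. -/
def SumSet (Δ I : Set V) : Set V :=
  {γ | γ ∈ Δ ∧ ∃ s : Multiset V, s ≠ 0 ∧ (∀ x ∈ s, x ∈ I) ∧ s.sum = γ}

theorem inner_multiset_sum (a : V) (s : Multiset V) :
    ⟪a, s.sum⟫ = (s.map (fun b => ⟪a,b⟫)).sum := by
  induction s using Multiset.induction with
  | empty => simp
  | cons b t ih => simp [inner_add_right, ih]

section GRS
variable {Δ : Set V} {d : V → ℤ} {Pos : Set V} (h : GradedRootSystem Δ d Pos)
include h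

theorem grs_root_inner_pos {γ : V} (hγ : γ ∈ Δ) : (0:ℝ) < ⟪γ,γ⟫ :=
  inner_self_pos' (h.nonzero γ hγ)

theorem grs_neg_not_pos {γ : V} (hγ : γ ∈ Pos) : -γ ∉ Pos :=
  (h.pos_iff γ (h.pos_subset hγ)).1 hγ

theorem grs_pos_of_not_neg {γ : V} (hγ : γ ∈ Δ) (hn : -γ ∉ Pos) : γ ∈ Pos :=
  (h.pos_iff γ hγ).2 hn

theorem grs_neg_pos_of_not_pos {γ : V} (hγ : γ ∈ Δ) (hn : γ ∉ Pos) : -γ ∈ Pos := by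
  by_contra hc
  exact hn (grs_pos_of_not_neg h hγ hc)

theorem grs_level_nonneg {γ : V} (hγ : γ ∈ Pos) : 0 ≤ d γ := by
  by_contra hc
  push_neg at hc
  have hγΔ : γ ∈ Δ := h.pos_subset hγ
  have h1 : (1:ℤ) ≤ d (-γ) := by rw [h.grade_neg γ hγΔ]; omega
  exact grs_neg_not_pos h hγ (h.compatible (-γ) (h.neg_mem γ hγΔ) h1)

theorem grs_lvl1_pos {γ : V} (hγ : γ ∈ level Δ d 1) : γ ∈ Pos :=
  h.compatible γ hγ.1 (le_of_eq hγ.2.symm)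

end GRS

theorem multiset_sum_nonpos' {s : Multiset ℝ} (hs : ∀ x ∈ s, x ≤ 0) : s.sum ≤ 0 := by
  induction s using Multiset.induction with
  | empty => simp
  | cons b t ih =>
    simp only [Multiset.sum_cons]
    have h1 := hs b (Multiset.mem_cons_self b t)
    have h2 := ih (fun x hx => hs x (Multiset.mem_cons_of_mem hx))
    linarith

theorem multiset_exists_pos_inner' {a : V} {s : Multiset V} (hs : 0 < ⟪a, s.sum⟫) :
    ∃ x ∈ s, 0 < ⟪a, x⟫ := by
  by_contra hc
  push_neg at hc
  have : (s.map (fun b => ⟪a,b⟫)).sum ≤ 0 := by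
    apply multiset_sum_nonpos'
    intro x hx
    obtain ⟨b, hb, rfl⟩ := Multiset.mem_map.mp hx
    exact hc b hb
  rw [inner_multiset_sum] at hs
  linarith

section GRS2
variable {Δ : Set V} {d : V → ℤ} {Pos : Set V} (h : GradedRootSystem Δ d Pos)
include h

theorem grs_add_root {α β : V} (hα : α ∈ Δ) (hβ : β ∈ Δ) (hin : ⟪α,β⟫ < 0)
    (hne : α + β ≠ 0) : α + β ∈ Δ := by
  have ha : (0:ℝ) < ⟪α,α⟫ := grs_root_inner_pos h hα
  have hb : (0:ℝ) < ⟪β,β⟫ := grs_root_inner_pos h hβ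
  obtain ⟨n, hn⟩ := h.crystallographic α hα β hβ
  obtain ⟨m, hm⟩ := h.crystallographic β hβ α hα
  rw [← real_inner_comm β α] at hn
  have hnneg : (n:ℝ) < 0 := by rw [hn]; exact div_neg_of_neg_of_pos (by linarith) ha
  have hmneg : (m:ℝ) < 0 := by
    rw [hm]; exact div_neg_of_neg_of_pos (by linarith) hb
  have hn0 : n < 0 := by exact_mod_cast hnneg
  have hm0 : m < 0 := by exact_mod_cast hmneg
  by_cases hcn : n = -1
  · have hr := h.reflect_mem α hα β hβ
    rw [← real_inner_comm β α, ← hn, hcn] at hr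
    push_cast at hr
    rw [neg_one_smul, sub_neg_eq_add] at hr
    rwa [add_comm]
  by_cases hcm : m = -1
  · have hr := h.reflect_mem β hβ α hα
    rw [← hm, hcm] at hr
    push_cast at hr
    rw [neg_one_smul, sub_neg_eq_add] at hr
    exact hr
  exfalso
  have hn2 : n ≤ -2 := by omega
  have hm2 : m ≤ -2 := by omega
  have hprod : (4:ℝ) ≤ (n:ℝ) * (m:ℝ) := by
    have h4 : (4:ℤ) ≤ n * m := by nlinarith
    exact_mod_cast h4
  set X : ℝ := ⟪α,β⟫ with hX
  set A : ℝ := ⟪α,α⟫ with hA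
  set B : ℝ := ⟪β,β⟫ with hB
  have hmB : (m:ℝ) * B = 2 * X := by rw [hm]; field_simp
  have hnA : (n:ℝ) * A = 2 * X := by rw [hn]; field_simp
  have hcs : A * B ≤ X * X := by
    have key : 4*(A*B) ≤ (n:ℝ)*(m:ℝ)*(A*B) := by nlinarith [mul_pos ha hb]
    nlinarith [key, hnA, hmB]
  set c : ℝ := X / A with hc
  have hcA : c * A = X := div_mul_cancel₀ _ ha.ne'
  have hv : ⟪β - c•α, β - c•α⟫ = B - 2*c*X + c^2*A := by
    simp only [inner_sub_left, inner_sub_right, real_inner_smul_left, real_inner_smul_right,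
      real_inner_comm α β, ← hX, ← hA, ← hB]
    ring
  have hv0 : ⟪β - c•α, β - c•α⟫ ≤ 0 := by
    rw [hv]
    nlinarith [hcA, hcs, ha, sq_nonneg (c*A - X)]
  have hveq : β - c•α = 0 := by
    by_contra hvne
    exact absurd hv0 (not_le.mpr (inner_self_pos' hvne))
  have hβc : β = c • α := by rwa [sub_eq_zero] at hveq
  have hcm' : c = 1 ∨ c = -1 := h.reduced α hα c (by rw [← hβc]; exact hβ)
  have hcneg : c < 0 := div_neg_of_neg_of_pos hin ha
  rcases hcm' with hc1 | hc1
  · rw [hc1] at hcneg; norm_num at hcneg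
  · apply hne
    rw [hβc, hc1, neg_one_smul]
    abel

theorem grs_sub_root {α β : V} (hα : α ∈ Δ) (hβ : β ∈ Δ) (hin : 0 < ⟪α,β⟫)
    (hne : α ≠ β) : α - β ∈ Δ := by
  have h1 : α + (-β) ∈ Δ := by
    apply grs_add_root h hα (h.neg_mem β hβ)
    · rw [inner_neg_right]; linarith
    · intro hc
      have h2 : α - β = 0 := by rw [sub_eq_add_neg]; exact hc
      exact hne (sub_eq_zero.mp h2)
  rwa [← sub_eq_add_neg] at h1

end GRS2
section GRS3
variable {Δ : Set V} {d : V → ℤ} {Pos : Set V} (h : GradedRootSystem Δ d Pos)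
include h

theorem grs_sum_ne_zero : ∀ (n : ℕ) (s : Multiset V), s.card = n → s ≠ 0 →
    (∀ x ∈ s, x ∈ Pos) → s.sum ≠ 0 := by
  intro n
  induction n using Nat.strong_induction_on with
  | _ n IH =>
    intro s hcard hne hmem hzero
    obtain ⟨a, ha⟩ := Multiset.exists_mem_of_ne_zero hne
    have haP := hmem a ha
    have haΔ := h.pos_subset haP
    set t := s.erase a with ht
    have hcons : a ::ₘ t = s := Multiset.cons_erase ha
    have hsum : a + t.sum = 0 := by rw [← hzero, ← hcons, Multiset.sum_cons]
    by_cases ht0 : t = 0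
    · rw [ht0] at hsum
      simp only [Multiset.sum_zero, add_zero] at hsum
      exact h.nonzero a haΔ hsum
    · have h1 : ⟪a, t.sum⟫ < 0 := by
        have hts : t.sum = -a := eq_neg_of_add_eq_zero_right hsum
        rw [hts, inner_neg_right]
        linarith [inner_self_pos' (h.nonzero a haΔ)]
      obtain ⟨p, hp, hpneg⟩ : ∃ p ∈ t, ⟪a,p⟫ < 0 := by
        by_contra hc; push_neg at hc
        have h2 : 0 ≤ ⟪a, t.sum⟫ := by
          rw [inner_multiset_sum]
          apply Multiset.sum_nonneg
          intro x hx
          obtain ⟨b, hb, rfl⟩ := Multiset.mem_map.mp hx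
          exact hc b hb
        linarith
      have hpP := hmem p (Multiset.mem_of_mem_erase hp)
      have hpΔ := h.pos_subset hpP
      have hne2 : a + p ≠ 0 := by
        intro hc
        have hpa : p = -a := eq_neg_of_add_eq_zero_right hc
        rw [hpa] at hpP
        exact grs_neg_not_pos h haP hpP
      have hap : a + p ∈ Δ := grs_add_root h haΔ hpΔ hpneg hne2
      have hapP : a + p ∈ Pos := h.pos_add a haP p hpP hap
      set u := (a + p) ::ₘ (t.erase p) with hu
      have htpos : 0 < t.card := Multiset.card_pos.mpr ht0
      have htcard : t.card = n - 1 := by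
        rw [ht, Multiset.card_erase_of_mem ha, Nat.pred_eq_sub_one, hcard]
      have hulat : u.card < n := by
        rw [hu, Multiset.card_cons, Multiset.card_erase_of_mem hp, Nat.pred_eq_sub_one]
        omega
      have hp2 : p ::ₘ t.erase p = t := Multiset.cons_erase hp
      have husum : u.sum = 0 := by
        rw [hu, Multiset.sum_cons]
        have h2 : p + (t.erase p).sum = t.sum := by rw [← Multiset.sum_cons, hp2]
        have : a + p + (t.erase p).sum = a + (p + (t.erase p).sum) := by abel
        rw [this, h2, hsum]
      apply IH u.card hulat u rfl (Multiset.cons_ne_zero)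
      · intro x hx
        rcases Multiset.mem_cons.mp hx with hx1 | hx2
        · rw [hx1]; exact hapP
        · exact hmem x (Multiset.mem_of_mem_erase (Multiset.mem_of_mem_erase hx2))
      · exact husum

theorem grs_sum_ne_zero' {s : Multiset V} (hne : s ≠ 0) (hmem : ∀ x ∈ s, x ∈ Pos) :
    s.sum ≠ 0 := grs_sum_ne_zero h s.card s rfl hne hmem

theorem grs_sum_mem_pos {s : Multiset V} (hne : s ≠ 0) (hmem : ∀ x ∈ s, x ∈ Pos)
    (hΔ : s.sum ∈ Δ) : s.sum ∈ Pos := by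
  by_contra hc
  have hns : -(s.sum) ∈ Pos := grs_neg_pos_of_not_pos h hΔ hc
  have : ((-(s.sum)) ::ₘ s).sum = 0 := by rw [Multiset.sum_cons]; abel
  apply grs_sum_ne_zero' h (Multiset.cons_ne_zero) _ this
  intro x hx
  rcases Multiset.mem_cons.mp hx with hx1 | hx2
  · rw [hx1]; exact hns
  · exact hmem x hx2

theorem grs_peel {s : Multiset V} {γ : V} (hcard : 2 ≤ s.card) (hmem : ∀ x ∈ s, x ∈ Pos)
    (hγ : γ ∈ Δ) (hsum : s.sum = γ) :
    ∃ β ∈ s, γ - β ∈ Δ ∧ (s.erase β).sum = γ - β := by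
  have h0 : 0 < ⟪γ, s.sum⟫ := by rw [hsum]; exact grs_root_inner_pos h hγ
  obtain ⟨β, hβs, hip⟩ := multiset_exists_pos_inner' h0
  have hβP := hmem β hβs
  have hβΔ := h.pos_subset hβP
  have hcons : β ::ₘ s.erase β = s := Multiset.cons_erase hβs
  have hesum : β + (s.erase β).sum = γ := by rw [← Multiset.sum_cons, hcons, hsum]
  have hneq : γ ≠ β := by
    intro hc
    have he0 : (s.erase β).sum = 0 := by
      have h2 : β + (s.erase β).sum = β + 0 := by rw [add_zero, hesum]; exact hc
      exact (add_right_inj β).mp h2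
    have hecard : 0 < (s.erase β).card := by
      rw [Multiset.card_erase_of_mem hβs, Nat.pred_eq_sub_one]; omega
    exact grs_sum_ne_zero' h (Multiset.card_pos.mp hecard)
      (fun x hx => hmem x (Multiset.mem_of_mem_erase hx)) he0
  refine ⟨β, hβs, grs_sub_root h hγ hβΔ hip hneq, ?_⟩
  have : (s.erase β).sum = (β + (s.erase β).sum) - β := by abel
  rw [this, hesum]

theorem grs_sum_mem_closed {M : Set V} (hMP : M ⊆ Pos) (hcl : IsClosedSubset Δ M) :
    ∀ (n : ℕ) (s : Multiset V), s.card = n → s ≠ 0 → (∀ x ∈ s, x ∈ M) →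
    s.sum ∈ Δ → s.sum ∈ M := by
  intro n
  induction n using Nat.strong_induction_on with
  | _ n IH =>
    intro s hcard hne hmem hΔ
    obtain ⟨a, ha⟩ := Multiset.exists_mem_of_ne_zero hne
    by_cases h1 : s.card ≤ 1
    · have : s = {a} := by
        have hc : s.card = 1 := le_antisymm h1 (Multiset.card_pos.mpr hne)
        obtain ⟨b, hb⟩ := Multiset.card_eq_one.mp hc
        rw [hb] at ha ⊢
        rw [Multiset.mem_singleton.mp ha]
      rw [this, Multiset.sum_singleton]
      exact hmem a (by rw [this]; exact Multiset.mem_singleton_self a)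
    · push_neg at h1
      obtain ⟨β, hβs, hroot, hesum⟩ :=
        grs_peel h h1 (fun x hx => hMP (hmem x hx)) hΔ rfl
      have hecard : (s.erase β).card < n := by
        rw [Multiset.card_erase_of_mem hβs, Nat.pred_eq_sub_one]; omega
      have hene : s.erase β ≠ 0 := by
        rw [← Multiset.card_pos, Multiset.card_erase_of_mem hβs, Nat.pred_eq_sub_one]; omega
      have hem : s.sum - β ∈ M := by
        rw [← hesum]
        exact IH _ hecard _ rfl hene (fun x hx => hmem x (Multiset.mem_of_mem_erase hx))
          (by rw [hesum]; exact hroot)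
      have := hcl β (hmem β hβs) (s.sum - β) hem
        (by rw [show β + (s.sum - β) = s.sum by abel]; exact hΔ)
      rwa [show β + (s.sum - β) = s.sum by abel] at this

theorem grs_sum_level (hlev : ∀ x, x ∈ level Δ d 1 → x ∈ Pos) :
    ∀ (n : ℕ) (s : Multiset V), s.card = n → s ≠ 0 → (∀ x ∈ s, x ∈ level Δ d 1) →
    s.sum ∈ Δ → d s.sum = (n : ℤ) := by
  intro n
  induction n using Nat.strong_induction_on with
  | _ n IH =>
    intro s hcard hne hmem hΔ
    obtain ⟨a, ha⟩ := Multiset.exists_mem_of_ne_zero hne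
    by_cases h1 : s.card ≤ 1
    · have hs : s = {a} := by
        have hc : s.card = 1 := le_antisymm h1 (Multiset.card_pos.mpr hne)
        obtain ⟨b, hb⟩ := Multiset.card_eq_one.mp hc
        rw [hb] at ha ⊢
        rw [Multiset.mem_singleton.mp ha]
      rw [hs] at hcard
      rw [Multiset.card_singleton] at hcard
      rw [hs, Multiset.sum_singleton]
      have := (hmem a ha).2
      omega
    · push_neg at h1
      obtain ⟨β, hβs, hroot, hesum⟩ :=
        grs_peel h h1 (fun x hx => hlev x (hmem x hx)) hΔ rfl
      have hecard : (s.erase β).card < n := by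
        rw [Multiset.card_erase_of_mem hβs, Nat.pred_eq_sub_one]; omega
      have hene : s.erase β ≠ 0 := by
        rw [← Multiset.card_pos, Multiset.card_erase_of_mem hβs, Nat.pred_eq_sub_one]; omega
      have hd : d (s.sum - β) = ((s.erase β).card : ℤ) := by
        rw [← hesum]
        exact IH _ hecard _ rfl hene (fun x hx => hmem x (Multiset.mem_of_mem_erase hx))
          (by rw [hesum]; exact hroot)
      have hadd := h.grade_add β (hmem β hβs).1 (s.sum - β) hroot
        (by rw [show β + (s.sum - β) = s.sum by abel]; exact hΔ)
      rw [show β + (s.sum - β) = s.sum by abel] at hadd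
      rw [hadd, hd, (hmem β hβs).2, Multiset.card_erase_of_mem hβs, Nat.pred_eq_sub_one, hcard]
      omega

theorem grs_gen_eq_sumset {I : Set V} (hIP : I ⊆ Pos) : gen Δ I = SumSet Δ I := by
  apply Set.Subset.antisymm
  · intro γ hγ
    obtain ⟨k, hk⟩ := Set.mem_iUnion.mp hγ
    clear hγ
    induction k generalizing γ with
    | zero =>
      refine ⟨h.pos_subset (hIP hk), {γ}, by simp, ?_, Multiset.sum_singleton γ⟩
      intro x hx
      rw [Multiset.mem_singleton.mp hx]
      exact hk
    | succ k IHk =>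
      obtain ⟨hγΔ, a, haI, b, hb, hab⟩ := hk
      obtain ⟨hbΔ, t, ht0, htm, hts⟩ := IHk hb
      refine ⟨hγΔ, a ::ₘ t, Multiset.cons_ne_zero, ?_, by rw [Multiset.sum_cons, hts, hab]⟩
      intro x hx
      rcases Multiset.mem_cons.mp hx with hx1 | hx2
      · rw [hx1]; exact haI
      · exact htm x hx2
  · rintro γ ⟨hγΔ, s, hs0, hsm, hss⟩
    have key : ∀ (n : ℕ) (s : Multiset V), s.card = n → s ≠ 0 → (∀ x ∈ s, x ∈ I) →
        ∀ γ ∈ Δ, s.sum = γ → γ ∈ gen Δ I := by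
      intro n
      induction n using Nat.strong_induction_on with
      | _ n IH =>
        intro s hcard hne hmem γ hγ hsum
        subst hsum
        obtain ⟨a, ha⟩ := Multiset.exists_mem_of_ne_zero hne
        by_cases h1 : s.card ≤ 1
        · have hc : s.card = 1 := le_antisymm h1 (Multiset.card_pos.mpr hne)
          obtain ⟨b, hb⟩ := Multiset.card_eq_one.mp hc
          subst hb
          rw [Multiset.sum_singleton]
          apply Set.mem_iUnion.mpr ⟨0, _⟩
          show b ∈ idealPow Δ I 1
          exact hmem b (Multiset.mem_singleton_self b)
        · push_neg at h1
          obtain ⟨β, hβs, hroot, hesum⟩ :=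
            grs_peel h h1 (fun x hx => hIP (hmem x hx)) hγ rfl
          have hecard : (s.erase β).card < n := by
            rw [Multiset.card_erase_of_mem hβs, Nat.pred_eq_sub_one]; omega
          have hene : s.erase β ≠ 0 := by
            rw [← Multiset.card_pos, Multiset.card_erase_of_mem hβs, Nat.pred_eq_sub_one]; omega
          have hgen : s.sum - β ∈ gen Δ I :=
            IH _ hecard _ rfl hene (fun x hx => hmem x (Multiset.mem_of_mem_erase hx))
              (s.sum - β) hroot hesum
          obtain ⟨k, hk⟩ := Set.mem_iUnion.mp hgen
          apply Set.mem_iUnion.mpr ⟨k + 1, _⟩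
          show s.sum ∈ idealPow Δ I (k+2)
          exact ⟨hγ, β, hmem β hβs, s.sum - β, hk, by abel⟩
    exact key s.card s rfl hs0 hsm γ hγΔ hss

theorem grs_sumset_subset_pos {I : Set V} (hIP : I ⊆ Pos) : SumSet Δ I ⊆ Pos := by
  rintro γ ⟨hγΔ, s, hs0, hsm, hss⟩
  rw [← hss]
  exact grs_sum_mem_pos h hs0 (fun x hx => hIP (hsm x hx)) (hss ▸ hγΔ)

theorem grs_sumset_closed {I : Set V} : IsClosedSubset Δ (SumSet Δ I) := by
  rintro γ₁ ⟨h1Δ, s, hs0, hsm, hss⟩ γ₂ ⟨h2Δ, t, ht0, htm, hts⟩ hsumΔ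
  refine ⟨hsumΔ, s + t, ?_, ?_, by rw [Multiset.sum_add, hss, hts]⟩
  · intro h0
    apply hs0
    have hc := congrArg Multiset.card h0
    rw [Multiset.card_add] at hc
    simp only [Multiset.card_zero] at hc
    exact Multiset.card_eq_zero.mp (by omega)
  · intro x hx
    rcases Multiset.mem_add.mp hx with hx1 | hx2
    · exact hsm x hx1
    · exact htm x hx2

theorem grs_self_subset_sumset {I : Set V} (hIP : I ⊆ Pos) : I ⊆ SumSet Δ I := by
  intro γ hγ
  refine ⟨h.pos_subset (hIP hγ), {γ}, by simp, ?_, Multiset.sum_singleton γ⟩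
  intro x hx
  rw [Multiset.mem_singleton.mp hx]
  exact hγ

theorem grs_sumset_inter_level {I : Set V} (hI1 : I ⊆ level Δ d 1) :
    SumSet Δ I ∩ level Δ d 1 = I := by
  apply Set.Subset.antisymm
  · rintro γ ⟨⟨hγΔ, s, hs0, hsm, hss⟩, hγlev⟩
    have hd := grs_sum_level h (fun x hx => grs_lvl1_pos h hx) s.card s rfl hs0
      (fun x hx => hI1 (hsm x hx)) (hss ▸ hγΔ)
    rw [hss, hγlev.2] at hd
    have hc1 : s.card = 1 := by omega
    obtain ⟨b, hb⟩ := Multiset.card_eq_one.mp hc1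
    rw [hb, Multiset.sum_singleton] at hss
    rw [← hss]
    exact hsm b (by rw [hb]; exact Multiset.mem_singleton_self b)
  · intro γ hγ
    exact ⟨grs_self_subset_sumset h (fun x hx => grs_lvl1_pos h (hI1 hx)) hγ, hI1 hγ⟩

end GRS3
/-- Descent relation on positive roots. -/
def wfrel (Pos : Set V) (x y : V) : Prop := x ∈ Pos ∧ y ∈ Pos ∧ y - x ∈ Pos

section GRS4
variable {Δ : Set V} {d : V → ℤ} {Pos : Set V} (h : GradedRootSystem Δ d Pos)

theorem transgen_wfrel_diff {x y : V} (hxy : Relation.TransGen (wfrel Pos) x y) :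
    ∃ s : Multiset V, s ≠ 0 ∧ (∀ p ∈ s, p ∈ Pos) ∧ y - x = s.sum := by
  induction hxy with
  | single hrel =>
    exact ⟨{_ - x}, by simp, fun p hp => by rw [Multiset.mem_singleton.mp hp]; exact hrel.2.2,
      (Multiset.sum_singleton _).symm⟩
  | tail hab hrel IH =>
    obtain ⟨s, hs0, hsm, hss⟩ := IH
    rename_i b c
    refine ⟨(c - b) ::ₘ s, Multiset.cons_ne_zero, ?_, ?_⟩
    · intro p hp
      rcases Multiset.mem_cons.mp hp with hp1 | hp2
      · rw [hp1]; exact hrel.2.2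
      · exact hsm p hp2
    · rw [Multiset.sum_cons, ← hss]; abel

include h

theorem grs_wfrel_wf : WellFounded (wfrel Pos) := by
  classical
  have hfin : Pos.Finite := h.finite.subset h.pos_subset
  set F := hfin.toFinset with hF
  set m : V → ℕ := fun v => (F.filter (fun z => Relation.TransGen (wfrel Pos) z v)).card with hm
  have hirr : ∀ x : V, ¬ Relation.TransGen (wfrel Pos) x x := by
    intro x hx
    obtain ⟨s, hs0, hsm, hss⟩ := transgen_wfrel_diff hx
    rw [sub_self] at hss
    exact grs_sum_ne_zero' h hs0 hsm hss.symm
  apply Subrelation.wf (r := InvImage (· < ·) m) ?_ (InvImage.wf m (Nat.lt_wfRel.wf))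
  · intro x y hxy
    show m x < m y
    apply Finset.card_lt_card
    have hsub : F.filter (fun z => Relation.TransGen (wfrel Pos) z x) ⊆
        F.filter (fun z => Relation.TransGen (wfrel Pos) z y) := by
      intro z hz
      rw [Finset.mem_filter] at hz ⊢
      exact ⟨hz.1, hz.2.tail hxy⟩
    rw [Finset.ssubset_iff_of_subset hsub]
    refine ⟨x, ?_, ?_⟩
    · rw [Finset.mem_filter]
      exact ⟨by rw [hF, Set.Finite.mem_toFinset]; exact hxy.1, Relation.TransGen.single hxy⟩
    · rw [Finset.mem_filter]
      intro hc
      exact hirr x hc.2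

theorem grs_pos0_mem_closure :
    ∀ γ ∈ pos0 d Pos, γ ∈ AddSubmonoid.closure (simpleRoots (pos0 d Pos)) := by
  intro γ hγ
  have main : ∀ v, (∀ u, wfrel Pos u v →
      (u ∈ pos0 d Pos → u ∈ AddSubmonoid.closure (simpleRoots (pos0 d Pos)))) →
      (v ∈ pos0 d Pos → v ∈ AddSubmonoid.closure (simpleRoots (pos0 d Pos))) := by
    intro v IH hv
    by_cases hs : v ∈ simpleRoots (pos0 d Pos)
    · exact AddSubmonoid.subset_closure hs
    · have hdec : ∃ a ∈ pos0 d Pos, ∃ b ∈ pos0 d Pos, v = a + b := by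
        by_contra hc
        exact hs ⟨hv, hc⟩
      obtain ⟨a, ha, b, hb, hab⟩ := hdec
      have hra : wfrel Pos a v := ⟨ha.1, hv.1, by rw [hab, add_sub_cancel_left]; exact hb.1⟩
      have hrb : wfrel Pos b v := ⟨hb.1, hv.1, by
        rw [hab, show a + b - b = a by abel]; exact ha.1⟩
      rw [hab]
      exact AddSubmonoid.add_mem _ (IH a hra ha) (IH b hrb hb)
  exact (grs_wfrel_wf h).induction (C := fun v => v ∈ pos0 d Pos →
    v ∈ AddSubmonoid.closure (simpleRoots (pos0 d Pos))) γ main hγ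

theorem grs_sref_root {α γ : V} (hα : α ∈ Δ) (hγ : γ ∈ Δ) : sref α γ ∈ Δ := by
  rw [sref_apply' α γ (h.nonzero α hα)]
  exact h.reflect_mem α hα γ hγ

omit h in
theorem sref_mul_self (α : V) : sref α * sref α = 1 :=
  LinearEquiv.ext (fun x => sref_sref α x)

omit h in
theorem sref_inv (α : V) : (sref α)⁻¹ = sref α :=
  inv_eq_of_mul_eq_one_left (sref_mul_self α)

theorem grs_sref_mem_weyl {α : V} (hα : α ∈ Δ) : sref α ∈ weyl Δ :=
  Subgroup.subset_closure ⟨α, hα, rfl⟩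

theorem grs_weyl_root {w : V ≃ₗ[ℝ] V} (hw : w ∈ weyl Δ) : ∀ γ ∈ Δ, w γ ∈ Δ := by
  suffices H : (∀ γ ∈ Δ, w γ ∈ Δ) ∧ (∀ γ ∈ Δ, w⁻¹ γ ∈ Δ) from H.1
  refine Subgroup.closure_induction ?_ ?_ ?_ ?_ hw
  · rintro x ⟨α, hα, rfl⟩
    constructor
    · intro γ hγ; exact grs_sref_root h hα hγ
    · intro γ hγ; rw [sref_inv]; exact grs_sref_root h hα hγ
  · constructor <;> intro γ hγ <;> simpa
  · rintro x y hx hy ⟨hx1, hx2⟩ ⟨hy1, hy2⟩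
    constructor
    · intro γ hγ
      show x (y γ) ∈ Δ
      exact hx1 _ (hy1 _ hγ)
    · intro γ hγ
      rw [mul_inv_rev]
      show y⁻¹ (x⁻¹ γ) ∈ Δ
      exact hy2 _ (hx2 _ hγ)
  · rintro x hx ⟨hx1, hx2⟩
    refine ⟨hx2, ?_⟩
    rw [inv_inv]
    exact hx1

theorem grs_invSet_one : invSet Pos (1 : V ≃ₗ[ℝ] V) = ∅ := by
  ext γ
  simp only [Set.mem_empty_iff_false, iff_false]
  rintro ⟨hP, hneg⟩
  exact grs_neg_not_pos h hP hneg

theorem grs_invSet_closed {w : V ≃ₗ[ℝ] V} (hw : w ∈ weyl Δ) :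
    IsClosedSubset Δ (invSet Pos w) := by
  rintro γ₁ ⟨h1P, h1n⟩ γ₂ ⟨h2P, h2n⟩ hsum
  refine ⟨h.pos_add _ h1P _ h2P hsum, ?_⟩
  rw [map_add, neg_add]
  apply h.pos_add _ h1n _ h2n
  rw [← neg_add, ← map_add]
  exact h.neg_mem _ (grs_weyl_root h hw _ hsum)

theorem grs_invSet_compl_closed {w : V ≃ₗ[ℝ] V} (hw : w ∈ weyl Δ) :
    IsClosedSubset Δ (Pos \ invSet Pos w) := by
  rintro γ₁ ⟨h1P, h1n⟩ γ₂ ⟨h2P, h2n⟩ hsum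
  have h1w : w γ₁ ∈ Pos :=
    grs_pos_of_not_neg h (grs_weyl_root h hw _ (h.pos_subset h1P)) (fun hc => h1n ⟨h1P, hc⟩)
  have h2w : w γ₂ ∈ Pos :=
    grs_pos_of_not_neg h (grs_weyl_root h hw _ (h.pos_subset h2P)) (fun hc => h2n ⟨h2P, hc⟩)
  refine ⟨h.pos_add _ h1P _ h2P hsum, fun hmem => ?_⟩
  have hw12 : w γ₁ + w γ₂ ∈ Pos := by
    apply h.pos_add _ h1w _ h2w
    rw [← map_add]
    exact grs_weyl_root h hw _ hsum
  have := hmem.2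
  rw [map_add] at this
  exact grs_neg_not_pos h hw12 this

theorem grs_W0_invSet_levelGE {w : V ≃ₗ[ℝ] V} (hw : w ∈ W0 Δ d Pos) :
    invSet Pos w ⊆ levelGE Δ d 1 := by
  rintro γ ⟨hP, hneg⟩
  have hΔ : γ ∈ Δ := h.pos_subset hP
  have h0 : 0 ≤ d γ := grs_level_nonneg h hP
  by_cases hd : d γ = 0
  · exact absurd (hw.2 γ ⟨hP, hd⟩) (fun hc => grs_neg_not_pos h hc hneg)
  · exact ⟨hΔ, by omega⟩

end GRS4
section GRS5
variable {Δ : Set V} {d : V → ℤ} {Pos : Set V} (h : GradedRootSystem Δ d Pos)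
include h

theorem grs_string_down {α : V} (hα : α ∈ Δ) :
    ∀ (j : ℕ), ∀ t ∈ Δ, t ≠ α → 2*(j:ℝ) ≤ 2*⟪t,α⟫/⟪α,α⟫ → t - (j:ℝ)•α ∈ Δ := by
  intro j
  induction j with
  | zero => intro t ht _ _; simpa using ht
  | succ j IH =>
    intro t ht htne hbound
    have haa : (0:ℝ) < ⟪α,α⟫ := grs_root_inner_pos h hα
    push_cast at hbound
    have hj0 : (0:ℝ) ≤ (j:ℝ) := Nat.cast_nonneg j
    have hip : 0 < ⟪t,α⟫ := by
      have h2 : (2:ℝ) ≤ 2*⟪t,α⟫/⟪α,α⟫ := by linarith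
      rw [le_div_iff₀ haa] at h2
      nlinarith
    have htsub : t - α ∈ Δ := grs_sub_root h ht hα hip htne
    have htsubne : t - α ≠ α := by
      intro hc
      have h2 : (2:ℝ) • α = t := by
        rw [show t = α + α from eq_add_of_sub_eq hc]; module
      rcases h.reduced α hα 2 (by rw [h2]; exact ht) with h3 | h3 <;> norm_num at h3
    have hbound2 : 2*(j:ℝ) ≤ 2*⟪t - α,α⟫/⟪α,α⟫ := by
      have hexp : 2*(⟪t,α⟫-⟪α,α⟫)/⟪α,α⟫ = 2*⟪t,α⟫/⟪α,α⟫ - 2 := by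
        field_simp
      rw [inner_sub_left, hexp]
      linarith
    have := IH (t - α) htsub htsubne hbound2
    have heq : t - α - (j:ℝ)•α = t - ((j:ℕ)+1:ℝ)•α := by
      push_cast
      module
    rw [heq] at this
    have hcast : ((j+1:ℕ):ℝ) = ((j:ℕ):ℝ) + 1 := by push_cast; ring
    rw [hcast]
    exact this

theorem grs_sref_eq_int {α γ : V} (hα : α ∈ Δ) (hγ : γ ∈ Δ) {n : ℤ}
    (hn : (n:ℝ) = 2*⟪γ,α⟫/⟪α,α⟫) : sref α γ = γ - (n:ℝ)•α := by
  rw [sref_apply' α γ (h.nonzero α hα), hn]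

theorem grs_sref_pos {α γ : V} (hαs : α ∈ simpleRoots Pos) (hγ : γ ∈ Pos)
    (hne : γ ≠ α) : sref α γ ∈ Pos := by
  have hαP : α ∈ Pos := hαs.1
  have hαΔ : α ∈ Δ := h.pos_subset hαP
  have hγΔ : γ ∈ Δ := h.pos_subset hγ
  have haa : (0:ℝ) < ⟪α,α⟫ := grs_root_inner_pos h hαΔ
  obtain ⟨n, hn⟩ := h.crystallographic α hαΔ γ hγΔ
  have hsref : sref α γ = γ - (n:ℝ)•α := grs_sref_eq_int h hαΔ hγΔ hn
  by_cases hn0 : 0 ≤ n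
  · -- descending string  γ, γ-α, ..., γ-nα
    set m : ℕ := n.toNat with hmdef
    have hmn : (m:ℤ) = n := Int.toNat_of_nonneg hn0
    have hmr : (m:ℝ) = (n:ℝ) := by exact_mod_cast hmn
    have hΔstep : ∀ i : ℕ, i ≤ m → γ - (i:ℝ)•α ∈ Δ := by
      intro i hi
      by_cases h2i : 2*i ≤ m
      · apply grs_string_down h hαΔ i γ hγΔ hne
        have : ((2*i:ℕ):ℝ) ≤ ((m:ℕ):ℝ) := Nat.cast_le.mpr h2i
        push_cast at this
        rw [← hn, ← hmr]
        linarith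
      · push_neg at h2i
        set j : ℕ := m - i with hjdef
        have hj2 : 2*j ≤ m := by omega
        have hjr : (j:ℝ) = (m:ℝ) - (i:ℝ) := by
          have : (j:ℤ) = (m:ℤ) - (i:ℤ) := by omega
          exact_mod_cast this
        have hjΔ : γ - (j:ℝ)•α ∈ Δ := by
          apply grs_string_down h hαΔ j γ hγΔ hne
          have : ((2*j:ℕ):ℝ) ≤ ((m:ℕ):ℝ) := Nat.cast_le.mpr hj2
          push_cast at this
          rw [← hn, ← hmr]
          linarith
        have heq : γ - (i:ℝ)•α = sref α (γ - (j:ℝ)•α) := by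
          rw [map_sub, map_smul, sref_self α (h.nonzero α hαΔ), hsref, hjr, ← hmr]
          module
        rw [heq]
        exact grs_sref_root h hαΔ hjΔ
    have hPstep : ∀ i : ℕ, i ≤ m → γ - (i:ℝ)•α ∈ Pos := by
      intro i
      induction i with
      | zero => intro _; simpa using hγ
      | succ i IH =>
        intro hi
        have ht : γ - (i:ℝ)•α ∈ Pos := IH (by omega)
        have ht' : γ - ((i+1:ℕ):ℝ)•α ∈ Δ := hΔstep (i+1) hi
        by_contra htc
        have hnt : -(γ - ((i+1:ℕ):ℝ)•α) ∈ Pos := grs_neg_pos_of_not_pos h ht' htc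
        apply hαs.2
        refine ⟨γ - (i:ℝ)•α, ht, -(γ - ((i+1:ℕ):ℝ)•α), hnt, ?_⟩
        push_cast
        module
    rw [hsref, ← hmr]
    exact hPstep m le_rfl
  · -- ascending string γ, γ+α, ..., γ+(-n)α
    push_neg at hn0
    set m : ℕ := (-n).toNat with hmdef
    have hmn : (m:ℤ) = -n := Int.toNat_of_nonneg (by omega)
    have hmr : (m:ℝ) = -(n:ℝ) := by exact_mod_cast hmn
    have hnegne : -γ ≠ α := by
      intro hc
      have : γ = -α := by rw [← hc]; abel
      rw [this] at hγ
      exact grs_neg_not_pos h hαP hγ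
    have hΔstep : ∀ i : ℕ, i ≤ m → γ + (i:ℝ)•α ∈ Δ := by
      intro i hi
      by_cases h2i : 2*i ≤ m
      · have hng : -γ - (i:ℝ)•α ∈ Δ := by
          apply grs_string_down h hαΔ i (-γ) (h.neg_mem γ hγΔ) hnegne
          have hci : ((2*i:ℕ):ℝ) ≤ ((m:ℕ):ℝ) := Nat.cast_le.mpr h2i
          push_cast at hci
          rw [hmr] at hci
          rw [inner_neg_left]
          have hflip : 2 * -⟪γ,α⟫ / ⟪α,α⟫ = -(2*⟪γ,α⟫/⟪α,α⟫) := by ring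
          rw [hflip, ← hn]
          linarith
        have : γ + (i:ℝ)•α = -(-γ - (i:ℝ)•α) := by module
        rw [this]
        exact h.neg_mem _ hng
      · push_neg at h2i
        set j : ℕ := m - i with hjdef
        have hj2 : 2*j ≤ m := by omega
        have hjr : (j:ℝ) = (m:ℝ) - (i:ℝ) := by
          have : (j:ℤ) = (m:ℤ) - (i:ℤ) := by omega
          exact_mod_cast this
        have hjΔ : γ + (j:ℝ)•α ∈ Δ := by
          have hng : -γ - (j:ℝ)•α ∈ Δ := by
            apply grs_string_down h hαΔ j (-γ) (h.neg_mem γ hγΔ) hnegne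
            have hci : ((2*j:ℕ):ℝ) ≤ ((m:ℕ):ℝ) := Nat.cast_le.mpr hj2
            push_cast at hci
            rw [hmr] at hci
            rw [inner_neg_left]
            have hflip : 2 * -⟪γ,α⟫ / ⟪α,α⟫ = -(2*⟪γ,α⟫/⟪α,α⟫) := by ring
            rw [hflip, ← hn]
            linarith
          have : γ + (j:ℝ)•α = -(-γ - (j:ℝ)•α) := by module
          rw [this]
          exact h.neg_mem _ hng
        have heq : γ + (i:ℝ)•α = sref α (γ + (j:ℝ)•α) := by
          rw [map_add, map_smul, sref_self α (h.nonzero α hαΔ), hsref, hjr, hmr]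
          module
        rw [heq]
        exact grs_sref_root h hαΔ hjΔ
    have hPstep : ∀ i : ℕ, i ≤ m → γ + (i:ℝ)•α ∈ Pos := by
      intro i
      induction i with
      | zero => intro _; simpa using hγ
      | succ i IH =>
        intro hi
        have ht : γ + (i:ℝ)•α ∈ Pos := IH (by omega)
        have ht' : γ + ((i+1:ℕ):ℝ)•α ∈ Δ := hΔstep (i+1) hi
        by_contra htc
        have hnt : -(γ + ((i+1:ℕ):ℝ)•α) ∈ Pos := grs_neg_pos_of_not_pos h ht' htc
        have hsumeq : (γ + (i:ℝ)•α) + (-(γ + ((i+1:ℕ):ℝ)•α)) = -α := by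
          push_cast
          module
        have : -α ∈ Pos := by
          rw [← hsumeq]
          exact h.pos_add _ ht _ hnt (by rw [hsumeq]; exact h.neg_mem α hαΔ)
        exact grs_neg_not_pos h hαP this
    have : sref α γ = γ + (m:ℝ)•α := by rw [hsref, hmr]; module
    rw [this]
    exact hPstep m le_rfl

end GRS5
section GRS6
variable {Δ : Set V} {d : V → ℤ} {Pos : Set V} (h : GradedRootSystem Δ d Pos)
include h

theorem grs_biconvex_inv : ∀ (n : ℕ) (M : Set V), M ⊆ Pos → IsBiConvex Δ Pos M →
    M.ncard = n → ∃ w ∈ weyl Δ, invSet Pos w = M := by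
  intro n
  induction n using Nat.strong_induction_on with
  | _ n IH =>
    intro M hMP hbc hcard
    have hMfin : M.Finite := h.finite.subset (hMP.trans h.pos_subset)
    rcases eq_or_ne n 0 with rfl | hn0
    · have hM0 : M = ∅ := (Set.ncard_eq_zero hMfin).mp hcard
      exact ⟨1, Subgroup.one_mem _, by rw [grs_invSet_one h, hM0]⟩
    · have hMne : M.Nonempty := by
        rw [Set.nonempty_iff_ne_empty]
        intro he
        rw [he, Set.ncard_empty] at hcard
        exact hn0 hcard.symm
      obtain ⟨α, hαM, hαmin⟩ := (grs_wfrel_wf h).has_min M hMne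
      have hαP : α ∈ Pos := hMP hαM
      have hαΔ : α ∈ Δ := h.pos_subset hαP
      have hαs : α ∈ simpleRoots Pos := by
        refine ⟨hαP, ?_⟩
        rintro ⟨a, haP, b, hbP, hab⟩
        have habΔ : a + b ∈ Δ := by rw [← hab]; exact hαΔ
        have hor : a ∈ M ∨ b ∈ M := by
          by_contra hc
          push_neg at hc
          have := hbc.2 a ⟨haP, hc.1⟩ b ⟨hbP, hc.2⟩ habΔ
          rw [← hab] at this
          exact this.2 hαM
        rcases hor with haM | hbM
        · exact hαmin a haM ⟨haP, hαP, by rw [hab, add_sub_cancel_left]; exact hbP⟩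
        · exact hαmin b hbM ⟨hbP, hαP, by
            rw [hab, show a + b - b = a by abel]; exact haP⟩
      set M' := (fun x => sref α x) '' (M \ {α}) with hM'def
      have hinj : Function.Injective (fun x : V => sref α x) := by
        intro x y hxy
        simpa using (sref α).injective hxy
      have hmemM' : ∀ y, y ∈ M' ↔ sref α y ∈ M \ {α} := by
        intro y
        constructor
        · rintro ⟨u, hu, rfl⟩
          simpa [sref_sref] using hu
        · intro hy
          exact ⟨sref α y, hy, sref_sref α y⟩
      have hM'P : M' ⊆ Pos := by
        rintro x ⟨u, ⟨huM, hune⟩, rfl⟩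
        exact grs_sref_pos h hαs (hMP huM) (by simpa using hune)
      have hnotM : ∀ x ∈ Pos, x ≠ α → x ∉ M' → sref α x ∉ M := by
        intro x hxP hxα hxn hc
        apply hxn
        rw [hmemM' x]
        refine ⟨hc, ?_⟩
        simp only [Set.mem_singleton_iff]
        intro heq
        have h1 := congrArg (fun z => sref α z) heq
        simp only [sref_sref] at h1
        rw [sref_self α (h.nonzero α hαΔ)] at h1
        rw [h1] at hxP
        exact grs_neg_not_pos h hαP hxP
      have hbc' : IsBiConvex Δ Pos M' := by
        constructor
        · rintro x ⟨u, ⟨huM, hune⟩, rfl⟩ y ⟨v, ⟨hvM, hvne⟩, rfl⟩ hsum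
          simp only at hsum ⊢
          have huv : u + v ∈ Δ := by
            have heq : sref α (sref α u + sref α v) = u + v := by
              rw [map_add, sref_sref, sref_sref]
            rw [← heq]
            exact grs_sref_root h hαΔ hsum
          have huvM : u + v ∈ M := hbc.1 u huM v hvM huv
          have huvne : u + v ≠ α := fun hc => hαs.2 ⟨u, hMP huM, v, hMP hvM, hc.symm⟩
          refine ⟨u + v, ⟨huvM, by simpa using huvne⟩, map_add _ u v⟩
        · rintro x ⟨hxP, hxn⟩ y ⟨hyP, hyn⟩ hsum
          refine ⟨h.pos_add _ hxP _ hyP hsum, ?_⟩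
          intro hxyM'
          have hz : sref α (x + y) ∈ M \ {α} := (hmemM' (x+y)).mp hxyM'
          by_cases hxα : x = α
          · by_cases hyα : y = α
            · rw [hxα, hyα] at hsum
              have h2 : (2:ℝ) • α = α + α := by module
              rcases h.reduced α hαΔ 2 (by rw [h2]; exact hsum) with h3 | h3 <;> norm_num at h3
            · rw [hxα] at hz hsum
              have hvP : sref α y ∈ Pos := grs_sref_pos h hαs hyP hyα
              have hvM : sref α y ∉ M := hnotM y hyP hyα hyn
              have hzv : sref α (α + y) = sref α y - α := by
                rw [map_add, sref_self α (h.nonzero α hαΔ)]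
                abel
              have hvz : sref α y = sref α (α + y) + α := by rw [hzv]; abel
              have : sref α (α + y) + α ∈ M := by
                apply hbc.1 _ hz.1 _ hαM
                rw [← hvz]
                exact h.pos_subset hvP
              rw [← hvz] at this
              exact hvM this
          · by_cases hyα : y = α
            · rw [hyα] at hz hsum
              have hvP : sref α x ∈ Pos := grs_sref_pos h hαs hxP hxα
              have hvM : sref α x ∉ M := hnotM x hxP hxα hxn
              have hzv : sref α (x + α) = sref α x - α := by
                rw [map_add, sref_self α (h.nonzero α hαΔ)]
                abel
              have hvz : sref α x = sref α (x + α) + α := by rw [hzv]; abel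
              have : sref α (x + α) + α ∈ M := by
                apply hbc.1 _ hz.1 _ hαM
                rw [← hvz]
                exact h.pos_subset hvP
              rw [← hvz] at this
              exact hvM this
            · have huP : sref α x ∈ Pos := grs_sref_pos h hαs hxP hxα
              have hvP : sref α y ∈ Pos := grs_sref_pos h hαs hyP hyα
              have huM : sref α x ∉ M := hnotM x hxP hxα hxn
              have hvM : sref α y ∉ M := hnotM y hyP hyα hyn
              have huvΔ : sref α x + sref α y ∈ Δ := by
                rw [← map_add]
                exact grs_sref_root h hαΔ hsum
              have := hbc.2 _ ⟨huP, huM⟩ _ ⟨hvP, hvM⟩ huvΔ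
              apply this.2
              rw [← map_add]
              exact hz.1
      have hcard' : M'.ncard < n := by
        rw [hM'def, Set.ncard_image_of_injective _ hinj]
        rw [← hcard]
        exact Set.ncard_diff_singleton_lt_of_mem hαM hMfin
      obtain ⟨w', hw', hw'inv⟩ := IH M'.ncard hcard' M' hM'P hbc' rfl
      refine ⟨w' * sref α, mul_mem hw' (grs_sref_mem_weyl h hαΔ), ?_⟩
      ext γ
      by_cases hγP : γ ∈ Pos
      · by_cases hγα : γ = α
        · rw [hγα]
          have hαM'n : α ∉ M' := by
            rw [hmemM' α, sref_self α (h.nonzero α hαΔ)]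
            rintro ⟨hc, -⟩
            exact grs_neg_not_pos h hαP (hMP hc)
          have hw'α : w' α ∈ Pos := by
            have : α ∉ invSet Pos w' := by rw [hw'inv]; exact hαM'n
            have hne : ¬(-(w' α) ∈ Pos) := fun hc => this ⟨hαP, hc⟩
            exact grs_pos_of_not_neg h (grs_weyl_root h hw' α hαΔ) hne
          apply iff_of_true _ hαM
          refine ⟨hαP, ?_⟩
          show -(w' (sref α α)) ∈ Pos
          rw [sref_self α (h.nonzero α hαΔ), map_neg, neg_neg]
          exact hw'α
        · have hsγP : sref α γ ∈ Pos := grs_sref_pos h hαs hγP hγα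
          constructor
          · rintro ⟨-, hγn⟩
            have : sref α γ ∈ invSet Pos w' := ⟨hsγP, hγn⟩
            rw [hw'inv, hmemM', sref_sref] at this
            exact this.1
          · intro hγM
            refine ⟨hγP, ?_⟩
            have : sref α γ ∈ M' := by
              rw [hmemM', sref_sref]
              exact ⟨hγM, by simpa using hγα⟩
            rw [← hw'inv] at this
            exact this.2
      · constructor
        · rintro ⟨hc, -⟩; exact absurd hc hγP
        · intro hc; exact absurd (hMP hc) hγP

theorem grs_biconvex_inv' {M : Set V} (hMP : M ⊆ Pos) (hbc : IsBiConvex Δ Pos M) :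
    ∃ w ∈ weyl Δ, invSet Pos w = M :=
  grs_biconvex_inv h M.ncard M hMP hbc rfl

end GRS6
theorem inner_cs_dep {x y : V} (hy : y ≠ 0)
    (hcs : ⟪x,x⟫*⟪y,y⟫ ≤ ⟪x,y⟫*⟪x,y⟫) : x = (⟪y,x⟫/⟪y,y⟫) • y := by
  have hyy : (0:ℝ) < ⟪y,y⟫ := inner_self_pos' hy
  set c : ℝ := ⟪y,x⟫/⟪y,y⟫ with hc
  have hcy : c * ⟪y,y⟫ = ⟪y,x⟫ := div_mul_cancel₀ _ hyy.ne'
  have hv : ⟪x - c•y, x - c•y⟫ = ⟪x,x⟫ - 2*c*⟪y,x⟫ + c^2*⟪y,y⟫ := by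
    simp only [inner_sub_left, inner_sub_right, real_inner_smul_left, real_inner_smul_right,
      real_inner_comm x y]
    ring
  have hxy : ⟪x,y⟫ = ⟪y,x⟫ := real_inner_comm y x
  rw [hxy] at hcs
  have hexp : (⟪x,x⟫ - 2*c*⟪y,x⟫ + c^2*⟪y,y⟫) * ⟪y,y⟫ = ⟪x,x⟫*⟪y,y⟫ - ⟪y,x⟫*⟪y,x⟫ := by
    linear_combination (c*⟪y,y⟫ - ⟪y,x⟫) * hcy
  have hv0 : ⟪x - c•y, x - c•y⟫ ≤ 0 := by
    rw [hv]
    nlinarith [hexp, hcs, hyy]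
  have hveq : x - c•y = 0 := by
    by_contra hvne
    exact absurd hv0 (not_le.mpr (inner_self_pos' hvne))
  rwa [sub_eq_zero] at hveq

section GRS7
variable {Δ : Set V} {d : V → ℤ} {Pos : Set V} (h : GradedRootSystem Δ d Pos)
include h

theorem grs_lemA {I : Set V} (hI : IsLowerIdeal Δ d Pos 1 I) :
    ∀ (n : ℕ) (s : Multiset V), s.card = n → s ≠ 0 → (∀ x ∈ s, x ∈ I) →
    ∀ β ∈ pos0 d Pos, ∀ ν ∈ Δ, ν = s.sum - β → ν ∈ SumSet Δ I := by
  have hIP : I ⊆ Pos := fun x hx => grs_lvl1_pos h (hI.1 hx)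
  intro n
  induction n using Nat.strong_induction_on with
  | _ n IH =>
    intro s hcard hne hmem β hβ ν hν hνeq
    have hβP : β ∈ Pos := hβ.1
    have hβΔ : β ∈ Δ := h.pos_subset hβP
    have hsmem : ∀ x ∈ s, x ∈ Pos := fun x hx => hIP (hmem x hx)
    by_cases h1 : s.card ≤ 1
    · have hc : s.card = 1 := le_antisymm h1 (Multiset.card_pos.mpr hne)
      obtain ⟨a, ha⟩ := Multiset.card_eq_one.mp hc
      subst ha
      rw [Multiset.sum_singleton] at hνeq
      have haI : a ∈ I := hmem a (Multiset.mem_singleton_self a)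
      have halev := hI.1 haI
      have hνβ : ν + β = a := by rw [hνeq]; abel
      have hdν : d ν = 1 := by
        have := h.grade_add ν hν β hβΔ (by rw [hνβ]; exact halev.1)
        rw [hνβ, halev.2, hβ.2] at this
        omega
      have hνI : ν ∈ I := by
        apply hI.2 a haI ν ⟨hν, hdν⟩
        show a - ν ∈ _
        rw [show a - ν = β by rw [← hνβ]; abel]
        exact grs_pos0_mem_closure h β hβ
      exact grs_self_subset_sumset h hIP hνI
    · push_neg at h1
      by_cases hA : ∃ x ∈ s, 0 < ⟪x, β⟫
      · obtain ⟨x, hxs, hip⟩ := hA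
        have hxI := hmem x hxs
        have hxlev := hI.1 hxI
        have hxΔ : x ∈ Δ := hxlev.1
        have hxβ : x ≠ β := by
          intro hc
          have : d β = 1 := by rw [← hc]; exact hxlev.2
          rw [hβ.2] at this
          omega
        have hxb : x - β ∈ Δ := grs_sub_root h hxΔ hβΔ hip hxβ
        have hdxb : d (x - β) = 1 := by
          have := h.grade_add (x - β) hxb β hβΔ (by rw [sub_add_cancel]; exact hxΔ)
          rw [sub_add_cancel, hxlev.2, hβ.2] at this
          omega
        have hxbI : x - β ∈ I := by
          apply hI.2 x hxI (x - β) ⟨hxb, hdxb⟩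
          show x - (x - β) ∈ _
          rw [show x - (x - β) = β by abel]
          exact grs_pos0_mem_closure h β hβ
        have hesum : (s.erase x).sum = s.sum - x := by
          have hcons : x ::ₘ s.erase x = s := Multiset.cons_erase hxs
          rw [show s.sum - x = (x + (s.erase x).sum) - x by rw [← Multiset.sum_cons, hcons]]
          abel
        refine ⟨hν, (x - β) ::ₘ s.erase x, Multiset.cons_ne_zero, ?_, ?_⟩
        · intro y hy
          rcases Multiset.mem_cons.mp hy with hy1 | hy2
          · rw [hy1]; exact hxbI
          · exact hmem y (Multiset.mem_of_mem_erase hy2)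
        · rw [Multiset.sum_cons, hesum, hνeq]
          abel
      · by_cases hB : ∃ x ∈ s, 0 < ⟪ν, x⟫
        · obtain ⟨x, hxs, hip⟩ := hB
          have hxI := hmem x hxs
          have hxΔ : x ∈ Δ := (hI.1 hxI).1
          by_cases hνx : ν = x
          · rw [hνx]
            exact grs_self_subset_sumset h hIP hxI
          · have hνxΔ : ν - x ∈ Δ := grs_sub_root h hν hxΔ hip hνx
            have hesum : (s.erase x).sum = s.sum - x := by
              have hcons : x ::ₘ s.erase x = s := Multiset.cons_erase hxs
              rw [show s.sum - x = (x + (s.erase x).sum) - x by rw [← Multiset.sum_cons, hcons]]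
              abel
            have hecard : (s.erase x).card < n := by
              rw [Multiset.card_erase_of_mem hxs, Nat.pred_eq_sub_one]; omega
            have hene : s.erase x ≠ 0 := by
              rw [← Multiset.card_pos, Multiset.card_erase_of_mem hxs, Nat.pred_eq_sub_one]
              omega
            have hsub : ν - x ∈ SumSet Δ I := by
              apply IH _ hecard _ rfl hene
                (fun y hy => hmem y (Multiset.mem_of_mem_erase hy)) β hβ (ν - x) hνxΔ
              rw [hesum, hνeq]
              abel
            obtain ⟨hΔ', t, ht0, htm, hts⟩ := hsub
            refine ⟨hν, x ::ₘ t, Multiset.cons_ne_zero, ?_, ?_⟩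
            · intro y hy
              rcases Multiset.mem_cons.mp hy with hy1 | hy2
              · rw [hy1]; exact hxI
              · exact htm y hy2
            · rw [Multiset.sum_cons, hts]; abel
        · exfalso
          push_neg at hA hB
          have hsumβ : ⟪s.sum, β⟫ ≤ 0 := by
            rw [real_inner_comm, inner_multiset_sum]
            apply multiset_sum_nonpos'
            intro y hy
            obtain ⟨b, hb, rfl⟩ := Multiset.mem_map.mp hy
            rw [real_inner_comm]
            exact hA b hb
          have hsumν : ⟪ν, s.sum⟫ ≤ 0 := by
            rw [inner_multiset_sum]
            apply multiset_sum_nonpos'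
            intro y hy
            obtain ⟨b, hb, rfl⟩ := Multiset.mem_map.mp hy
            exact hB b hb
          have hββ : (0:ℝ) < ⟪β,β⟫ := grs_root_inner_pos h hβΔ
          have hνν : (0:ℝ) < ⟪ν,ν⟫ := grs_root_inner_pos h hν
          have hνβ : ⟪ν, β⟫ ≤ -⟪β,β⟫ := by
            rw [hνeq, inner_sub_left]
            linarith
          have hννb : ⟪ν,ν⟫ ≤ -⟪ν,β⟫ := by
            rw [hνeq] at *
            rw [inner_sub_right]
            have : ⟪s.sum - β, s.sum⟫ ≤ 0 := hsumν
            rw [inner_sub_left] at this ⊢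
            nlinarith [real_inner_comm (s.sum) β]
          have hcs : ⟪ν,ν⟫*⟪β,β⟫ ≤ ⟪ν,β⟫*⟪ν,β⟫ := by nlinarith
          have hdep := inner_cs_dep (h.nonzero β hβΔ) hcs
          have hcneg : ⟪β,ν⟫/⟪β,β⟫ < 0 := by
            apply div_neg_of_neg_of_pos _ hββ
            rw [real_inner_comm]
            linarith
          rcases h.reduced β hβΔ _ (by rw [← hdep]; exact hν) with hc1 | hc1
          · rw [hc1] at hcneg; norm_num at hcneg
          · rw [hc1, neg_one_smul] at hdep
            have : s.sum = 0 := by rw [hνeq] at hdep; rw [show s.sum = (s.sum - β) + β by abel, hdep]; abel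
            exact grs_sum_ne_zero' h hne hsmem this

end GRS7
section GRS8
variable {Δ : Set V} {d : V → ℤ} {Pos : Set V} (h : GradedRootSystem Δ d Pos)
include h

theorem grs_lemB {I : Set V} (hI : IsLowerIdeal Δ d Pos 1 I) :
    ∀ (n : ℕ) (s : Multiset V), s.card = n → s ≠ 0 → (∀ x ∈ s, x ∈ I) →
    ∀ γ₁ ∈ Δ, ∀ γ₂ ∈ Δ, 1 ≤ d γ₁ → 1 ≤ d γ₂ → γ₁ + γ₂ = s.sum →
    γ₁ ∈ SumSet Δ I ∨ γ₂ ∈ SumSet Δ I := by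
  have hIP : I ⊆ Pos := fun x hx => grs_lvl1_pos h (hI.1 hx)
  intro n
  induction n using Nat.strong_induction_on with
  | _ n IH =>
    intro s hcard hne hmem γ₁ hγ₁ γ₂ hγ₂ hd₁ hd₂ hsum
    have hsmem : ∀ x ∈ s, x ∈ Pos := fun x hx => hIP (hmem x hx)
    by_cases h1 : s.card ≤ 1
    · exfalso
      have hc : s.card = 1 := le_antisymm h1 (Multiset.card_pos.mpr hne)
      obtain ⟨a, ha⟩ := Multiset.card_eq_one.mp hc
      subst ha
      rw [Multiset.sum_singleton] at hsum
      have haI : a ∈ I := hmem a (Multiset.mem_singleton_self a)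
      have := h.grade_add γ₁ hγ₁ γ₂ hγ₂ (by rw [hsum]; exact (hI.1 haI).1)
      rw [hsum, (hI.1 haI).2] at this
      omega
    · push_neg at h1
      have key : ∀ δ₁ δ₂ : V, δ₁ ∈ Δ → δ₂ ∈ Δ → 1 ≤ d δ₁ → 1 ≤ d δ₂ →
          δ₁ + δ₂ = s.sum → 0 < ⟪δ₁, s.sum⟫ →
          δ₁ ∈ SumSet Δ I ∨ δ₂ ∈ SumSet Δ I := by
        intro δ₁ δ₂ hδ₁ hδ₂ he₁ he₂ hes hpos
        obtain ⟨x, hxs, hip⟩ := multiset_exists_pos_inner' hpos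
        have hxI := hmem x hxs
        have hxlev := hI.1 hxI
        have hxΔ : x ∈ Δ := hxlev.1
        by_cases hδx : δ₁ = x
        · exact Or.inl (by rw [hδx]; exact grs_self_subset_sumset h hIP hxI)
        · have hsubΔ : δ₁ - x ∈ Δ := grs_sub_root h hδ₁ hxΔ hip hδx
          have hdsub : d (δ₁ - x) = d δ₁ - 1 := by
            have := h.grade_add (δ₁ - x) hsubΔ x hxΔ (by rw [sub_add_cancel]; exact hδ₁)
            rw [sub_add_cancel, hxlev.2] at this
            omega
          have hesum : (s.erase x).sum = s.sum - x := by
            have hcons : x ::ₘ s.erase x = s := Multiset.cons_erase hxs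
            rw [show s.sum - x = (x + (s.erase x).sum) - x by rw [← Multiset.sum_cons, hcons]]
            abel
          have hecard : (s.erase x).card < n := by
            rw [Multiset.card_erase_of_mem hxs, Nat.pred_eq_sub_one]; omega
          have hene : s.erase x ≠ 0 := by
            rw [← Multiset.card_pos, Multiset.card_erase_of_mem hxs, Nat.pred_eq_sub_one]
            omega
          by_cases hj : d δ₁ = 1
          · have hd0 : d (δ₁ - x) = 0 := by omega
            by_cases hxg : x - δ₁ ∈ Pos
            · left
              have hdneg : d (x - δ₁) = 0 := by
                have := h.grade_neg (δ₁ - x) hsubΔ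
                rw [neg_sub] at this
                omega
              have : δ₁ ∈ I := by
                apply hI.2 x hxI δ₁ ⟨hδ₁, hj⟩
                show x - δ₁ ∈ _
                exact grs_pos0_mem_closure h (x - δ₁) ⟨hxg, hdneg⟩
              exact grs_self_subset_sumset h hIP this
            · right
              have hβP : δ₁ - x ∈ Pos := grs_pos_of_not_neg h hsubΔ (by rwa [neg_sub])
              apply grs_lemA h hI (s.erase x).card (s.erase x) rfl hene
                (fun y hy => hmem y (Multiset.mem_of_mem_erase hy)) (δ₁ - x) ⟨hβP, hd0⟩ δ₂ hδ₂
              rw [hesum, ← hes]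
              abel
          · have hd1' : 1 ≤ d (δ₁ - x) := by omega
            have heq : (δ₁ - x) + δ₂ = (s.erase x).sum := by
              rw [hesum, ← hes]; abel
            rcases IH _ hecard _ rfl hene
                (fun y hy => hmem y (Multiset.mem_of_mem_erase hy))
                (δ₁ - x) hsubΔ δ₂ hδ₂ hd1' he₂ heq with hL | hR
            · left
              obtain ⟨hΔ', t, ht0, htm, hts⟩ := hL
              refine ⟨hδ₁, x ::ₘ t, Multiset.cons_ne_zero, ?_, ?_⟩
              · intro y hy
                rcases Multiset.mem_cons.mp hy with hy1 | hy2
                · rw [hy1]; exact hxI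
                · exact htm y hy2
              · rw [Multiset.sum_cons, hts]; abel
            · exact Or.inr hR
      have hsne : s.sum ≠ 0 := grs_sum_ne_zero' h hne hsmem
      have hpos : 0 < ⟪s.sum, s.sum⟫ := inner_self_pos' hsne
      have hsplit : 0 < ⟪γ₁, s.sum⟫ ∨ 0 < ⟪γ₂, s.sum⟫ := by
        by_contra hc
        push_neg at hc
        have : ⟪γ₁ + γ₂, s.sum⟫ ≤ 0 := by
          rw [inner_add_left]; linarith [hc.1, hc.2]
        rw [hsum] at this
        linarith
      rcases hsplit with hp1 | hp2
      · exact key γ₁ γ₂ hγ₁ hγ₂ hd₁ hd₂ hsum hp1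
      · exact (key γ₂ γ₁ hγ₂ hγ₁ hd₂ hd₁ (by rw [add_comm]; exact hsum) hp2).symm

theorem grs_sumset_compl_closed {I : Set V} (hI : IsLowerIdeal Δ d Pos 1 I) :
    IsClosedSubset Δ (Pos \ SumSet Δ I) := by
  rintro γ₁ ⟨h1P, h1n⟩ γ₂ ⟨h2P, h2n⟩ hsum
  refine ⟨h.pos_add _ h1P _ h2P hsum, ?_⟩
  rintro ⟨hΔs, s, hs0, hsm, hss⟩
  have h1Δ : γ₁ ∈ Δ := h.pos_subset h1P
  have h2Δ : γ₂ ∈ Δ := h.pos_subset h2P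
  have hd1 : 0 ≤ d γ₁ := grs_level_nonneg h h1P
  have hd2 : 0 ≤ d γ₂ := grs_level_nonneg h h2P
  by_cases hz1 : d γ₁ = 0
  · apply h2n
    apply grs_lemA h hI s.card s rfl hs0 hsm γ₁ ⟨h1P, hz1⟩ γ₂ h2Δ
    rw [hss]
    abel
  · by_cases hz2 : d γ₂ = 0
    · apply h1n
      apply grs_lemA h hI s.card s rfl hs0 hsm γ₂ ⟨h2P, hz2⟩ γ₁ h1Δ
      rw [hss]
      abel
    · rcases grs_lemB h hI s.card s rfl hs0 hsm γ₁ h1Δ γ₂ h2Δ (by omega) (by omega) hss.symm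
        with hL | hR
      · exact h1n hL
      · exact h2n hR

end GRS8
section GRS9
variable {Δ : Set V} {d : V → ℤ} {Pos : Set V} (h : GradedRootSystem Δ d Pos)
include h

theorem grs_part1 {I : Set V} (hI : IsLowerIdeal Δ d Pos 1 I) :
    ∃ w ∈ W0 Δ d Pos, invSet Pos w ∩ level Δ d 1 = I := by
  have hIlev := hI.1
  have hIP : I ⊆ Pos := fun x hx => grs_lvl1_pos h (hIlev hx)
  have hbc : IsBiConvex Δ Pos (SumSet Δ I) :=
    ⟨grs_sumset_closed h, grs_sumset_compl_closed h hI⟩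
  obtain ⟨w, hw, hwinv⟩ := grs_biconvex_inv' h (grs_sumset_subset_pos h hIP) hbc
  refine ⟨w, ⟨hw, ?_⟩, ?_⟩
  · intro γ hγ
    have hγΔ : γ ∈ Δ := h.pos_subset hγ.1
    have hnotinv : γ ∉ invSet Pos w := by
      rw [hwinv]
      rintro ⟨hΔ', s, hs0, hsm, hss⟩
      have hlev := grs_sum_level h (fun x hx => grs_lvl1_pos h hx) s.card s rfl hs0
        (fun x hx => hIlev (hsm x hx)) (hss ▸ hΔ')
      rw [hss] at hlev
      have hc1 : 1 ≤ s.card := Multiset.card_pos.mpr hs0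
      rw [hγ.2] at hlev
      omega
    exact grs_pos_of_not_neg h (grs_weyl_root h hw γ hγΔ) (fun hc => hnotinv ⟨hγ.1, hc⟩)
  · rw [hwinv]
    exact grs_sumset_inter_level h hIlev

theorem grs_part2 {I : Set V} (hI : IsLowerIdeal Δ d Pos 1 I)
    {wmin wmax : V ≃ₗ[ℝ] V} (hwmin : wmin ∈ W0 Δ d Pos) (hwmax : wmax ∈ W0 Δ d Pos)
    (hmin : invSet Pos wmin = gen Δ I)
    (hmax : invSet Pos wmax = levelGE Δ d 1 \ gen Δ (level Δ d 1 \ I))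
    {w : V ≃ₗ[ℝ] V} (hw : w ∈ W0 Δ d Pos) :
    invSet Pos w ∩ level Δ d 1 = I ↔
      invSet Pos wmin ⊆ invSet Pos w ∧ invSet Pos w ⊆ invSet Pos wmax := by
  have hIlev := hI.1
  have hIP : I ⊆ Pos := fun x hx => grs_lvl1_pos h (hIlev hx)
  have hgen : gen Δ I = SumSet Δ I := grs_gen_eq_sumset h hIP
  have hIcP : level Δ d 1 \ I ⊆ Pos := fun x hx => grs_lvl1_pos h hx.1
  have hgenc : gen Δ (level Δ d 1 \ I) = SumSet Δ (level Δ d 1 \ I) :=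
    grs_gen_eq_sumset h hIcP
  constructor
  · intro hfiber
    have hIsubinv : I ⊆ invSet Pos w := by
      intro x hx
      have : x ∈ invSet Pos w ∩ level Δ d 1 := by rw [hfiber]; exact hx
      exact this.1
    constructor
    · rw [hmin, hgen]
      rintro γ ⟨hγΔ, s, hs0, hsm, hss⟩
      rw [← hss]
      exact grs_sum_mem_closed h (fun y hy => hy.1) (grs_invSet_closed h hw.1)
        s.card s rfl hs0 (fun x hx => hIsubinv (hsm x hx)) (hss ▸ hγΔ)
    · rw [hmax]
      intro γ hγ
      refine ⟨grs_W0_invSet_levelGE h hw hγ, ?_⟩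
      rw [hgenc]
      rintro ⟨hγΔ, s, hs0, hsm, hss⟩
      have hsubc : level Δ d 1 \ I ⊆ Pos \ invSet Pos w := by
        intro x hx
        refine ⟨grs_lvl1_pos h hx.1, fun hxinv => hx.2 ?_⟩
        rw [← hfiber]
        exact ⟨hxinv, hx.1⟩
      have := grs_sum_mem_closed h (fun y hy => hy.1) (grs_invSet_compl_closed h hw.1)
        s.card s rfl hs0 (fun x hx => hsubc (hsm x hx)) (hss ▸ hγΔ)
      rw [hss] at this
      exact this.2 hγ
  · rintro ⟨hminsub, hmaxsub⟩
    apply Set.Subset.antisymm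
    · intro γ hγ
      by_contra hγI
      have hγmax := hmaxsub hγ.1
      rw [hmax] at hγmax
      apply hγmax.2
      rw [hgenc]
      exact grs_self_subset_sumset h hIcP ⟨hγ.2, hγI⟩
    · intro γ hγ
      refine ⟨hminsub ?_, hIlev hγ⟩
      rw [hmin, hgen]
      exact grs_self_subset_sumset h hIP hγ

end GRS9


/-- The map `τ : W⁰ → J₋(Δ(1))`, `w ↦ N(w) ∩ Δ(1)`, is surjective, and each fiber
`τ⁻¹(I)` is the interval `[w_{I,min}, w_{I,max}]` in the weak Bruhat order. -/
theorem stmt9 (Δ : Set V) (d : V → ℤ) (Pos : Set V)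
    (h : GradedRootSystem Δ d Pos) :
    (∀ I : Set V, IsLowerIdeal Δ d Pos 1 I →
      ∃ w ∈ W0 Δ d Pos, invSet Pos w ∩ level Δ d 1 = I) ∧
    (∀ I : Set V, IsLowerIdeal Δ d Pos 1 I →
      ∀ wmin ∈ W0 Δ d Pos, ∀ wmax ∈ W0 Δ d Pos,
        invSet Pos wmin = gen Δ I →
        invSet Pos wmax = levelGE Δ d 1 \ gen Δ (level Δ d 1 \ I) →
        ∀ w ∈ W0 Δ d Pos,
          (invSet Pos w ∩ level Δ d 1 = I ↔
            invSet Pos wmin ⊆ invSet Pos w ∧ invSet Pos w ⊆ invSet Pos wmax)) := by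
  constructor
  · intro I hI
    exact grs_part1 h hI
  · intro I hI wmin hwmin wmax hwmax hmin hmax w hw
    exact grs_part2 h hI hwmin hwmax hmin hmax hw
end
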